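/- (Termination Theorem) In any execution of Algorithm 1 in the stated model, every message that is toco-broadcast by some process is eventually toco-delivered by every process in the system. -/

import Mathlib

/-!
Operational model of Algorithm 1 (the `G`-fisheye (SC,CC)-broadcast algorithm).

`n` sequential asynchronous processes `p_0, …, p_{n-1}` (type `Fin n`) exchange
application messages of type `M` through reliable FIFO channels (one queue per
ordered pair of processes).  A proximity graph is a `SimpleGraph (Fin n)`.
-/

namespace Fisheye

/-- A tuple `⟨m, s_caus, s_tot, sender⟩`, as carried by `TOCOBC` protocol
messages and as stored in the `pending` sets of Algorithm 1. -/
structure Tuple (n : ℕ) (M : Type) where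
  msg : M
  scaus : Fin n → ℕ
  stot : ℕ
  sender : Fin n

/-- Protocol messages of Algorithm 1. -/
inductive PMsg (n : ℕ) (M : Type) where
  | tocobc (tp : Tuple n M)
  | catchup (d : ℕ) (sender : Fin n)

/-- Local state of a process: the vector clock `causal_i[1..n]`, the vector of
logical clock values `total_i[1..n]`, and the set `pending_i`. -/
structure ProcState (n : ℕ) (M : Type) where
  causal : Fin n → ℕ
  total : Fin n → ℕ
  pending : Set (Tuple n M)

/-- Global configuration: local states plus channel contents.
`chan j i` is the FIFO queue of protocol messages in transit from `p_j`
to `p_i` (head = oldest message). -/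
structure Config (n : ℕ) (M : Type) where
  proc : Fin n → ProcState n M
  chan : Fin n → Fin n → List (PMsg n M)

/-- Initially all clocks are `0`, all pending sets and channels are empty. -/
def initConfig (n : ℕ) (M : Type) : Config n M where
  proc := fun _ => { causal := fun _ => 0, total := fun _ => 0, pending := ∅ }
  chan := fun _ _ => []

/-- Lexicographic strict order on timestamps `⟨s_tot, sender⟩`. -/
def tsLt {n : ℕ} (x y : ℕ × Fin n) : Prop :=
  x.1 < y.1 ∨ (x.1 = y.1 ∧ x.2 < y.2)

/-- Lexicographic (reflexive) order on timestamps. -/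
def tsLe {n : ℕ} (x y : ℕ × Fin n) : Prop := tsLt x y ∨ x = y

/-- The set `C` at process `p_i`: pending tuples whose causal timestamp is
pointwise `≤ causal_i[·]`. -/
def inC {n : ℕ} {M : Type} (c : Config n M) (i : Fin n) (tp : Tuple n M) : Prop :=
  tp ∈ (c.proc i).pending ∧ ∀ k, tp.scaus k ≤ (c.proc i).causal k

/-- The set `T1` at `p_i`: tuples of `C` whose sender `p_j` satisfies
`⟨total_i[k], k⟩ > ⟨s_tot, j⟩` for every neighbor `p_k` of `p_j` in `G`. -/
def inT1 {n : ℕ} {M : Type} (G : SimpleGraph (Fin n)) (c : Config n M) (i : Fin n)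
    (tp : Tuple n M) : Prop :=
  inC c i tp ∧ ∀ k, G.Adj tp.sender k → tsLt (tp.stot, tp.sender) ((c.proc i).total k, k)

/-- The set `T2` at `p_i`: tuples of `T1` such that every pending tuple whose
sender is a neighbor of `p_j` has a (lexicographically) larger timestamp. -/
def inT2 {n : ℕ} {M : Type} (G : SimpleGraph (Fin n)) (c : Config n M) (i : Fin n)
    (tp : Tuple n M) : Prop :=
  inT1 G c i tp ∧ ∀ tp' ∈ (c.proc i).pending, G.Adj tp.sender tp'.sender →
    tsLt (tp.stot, tp.sender) (tp'.stot, tp'.sender)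

/-- Transition labels: `p_i` toco-broadcasts `m`; `p_i` receives the head
`TOCOBC` (resp. `CATCH_UP`) message of the channel from `p_j`; `p_i`
toco-delivers the message of the pending tuple `tp`. -/
inductive Label (n : ℕ) (M : Type) where
  | broadcast (i : Fin n) (m : M)
  | recvToco (i j : Fin n)
  | recvCatchup (i j : Fin n)
  | deliver (i : Fin n) (tp : Tuple n M)

/-- The transition relation of Algorithm 1. -/
inductive Step {n : ℕ} {M : Type} (G : SimpleGraph (Fin n)) :
    Config n M → Label n M → Config n M → Prop
  /-- `TOCO_broadcast(m)` at `p_i`: increment `total_i[i]`, send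
  `TOCOBC(m, ⟨causal_i[·], total_i[i], i⟩)` to every other process, add it to
  `pending_i`, and increment `causal_i[i]`. -/
  | broadcast (c : Config n M) (i : Fin n) (m : M) :
      Step G c (.broadcast i m)
        { proc := Function.update c.proc i
            { causal := Function.update (c.proc i).causal i ((c.proc i).causal i + 1)
              total := Function.update (c.proc i).total i ((c.proc i).total i + 1)
              pending := insert ⟨m, (c.proc i).causal, (c.proc i).total i + 1, i⟩
                           (c.proc i).pending }
          chan := fun a b =>
            if a = i ∧ b ≠ i then
              c.chan a b ++ [PMsg.tocobc ⟨m, (c.proc i).causal, (c.proc i).total i + 1, i⟩]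
            else c.chan a b }
  /-- Reception by `p_i` of the head `TOCOBC(m, ⟨s_caus, s_tot, sender⟩)` of the
  channel from `p_j`: add the tuple to `pending_i`, set `total_i[sender] := s_tot`,
  and if `total_i[i] ≤ s_tot`, set `total_i[i] := s_tot + 1` and send
  `CATCH_UP(total_i[i], i)` to every other process. -/
  | recvToco (c : Config n M) (i j : Fin n) (tp : Tuple n M) (rest : List (PMsg n M))
      (hhead : c.chan j i = PMsg.tocobc tp :: rest) :
      Step G c (.recvToco i j)
        { proc := Function.update c.proc i
            { causal := (c.proc i).causal
              total :=
                if (c.proc i).total i ≤ tp.stot then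
                  Function.update (Function.update (c.proc i).total tp.sender tp.stot) i
                    (tp.stot + 1)
                else Function.update (c.proc i).total tp.sender tp.stot
              pending := insert tp (c.proc i).pending }
          chan := fun a b =>
            if a = j ∧ b = i then rest
            else if (c.proc i).total i ≤ tp.stot ∧ a = i ∧ b ≠ i then
              c.chan a b ++ [PMsg.catchup (tp.stot + 1) i]
            else c.chan a b }
  /-- Reception by `p_i` of the head `CATCH_UP(d, s)` of the channel from `p_j`:
  set `total_i[s] := d`. -/
  | recvCatchup (c : Config n M) (i j : Fin n) (d : ℕ) (s : Fin n) (rest : List (PMsg n M))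
      (hhead : c.chan j i = PMsg.catchup d s :: rest) :
      Step G c (.recvCatchup i j)
        { proc := Function.update c.proc i
            { causal := (c.proc i).causal
              total := Function.update (c.proc i).total s d
              pending := (c.proc i).pending }
          chan := fun a b => if a = j ∧ b = i then rest else c.chan a b }
  /-- The background task at `p_i`: toco-deliver the message of a tuple of `T2`
  with lexicographically minimal timestamp `⟨s_tot, sender⟩`, remove it from
  `pending_i`, and (if its sender is not `p_i`) increment `causal_i[sender]`. -/
  | deliver (c : Config n M) (i : Fin n) (tp : Tuple n M)
      (hT2 : inT2 G c i tp)
      (hmin : ∀ tp', inT2 G c i tp' → tsLe (tp.stot, tp.sender) (tp'.stot, tp'.sender)) :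
      Step G c (.deliver i tp)
        { proc := Function.update c.proc i
            { causal :=
                if tp.sender = i then (c.proc i).causal
                else Function.update (c.proc i).causal tp.sender
                       ((c.proc i).causal tp.sender + 1)
              total := (c.proc i).total
              pending := (c.proc i).pending \ {tp} }
          chan := c.chan }

/-- Either a stuttering step (no transition) or a step of Algorithm 1. -/
def OptStep {n : ℕ} {M : Type} (G : SimpleGraph (Fin n)) (c : Config n M) :
    Option (Label n M) → Config n M → Prop
  | none, c' => c' = c
  | some l, c' => Step G c l c'

/-- An execution of Algorithm 1: an infinite sequence of configurations starting
in the initial configuration, each obtained from the previous one by (at most)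
one transition.  Toco-broadcast (application) messages are assumed unique: no
message is toco-broadcast twice. -/
structure Execution (n : ℕ) (M : Type) (G : SimpleGraph (Fin n)) where
  cfg : ℕ → Config n M
  lbl : ℕ → Option (Label n M)
  init : cfg 0 = initConfig n M
  steps : ∀ t, OptStep G (cfg t) (lbl t) (cfg (t + 1))
  uniqueBcast : ∀ (m : M) (i i' : Fin n) (t t' : ℕ),
    lbl t = some (.broadcast i m) → lbl t' = some (.broadcast i' m) → t = t'

/-- `p_i` toco-broadcasts `m` at time `t`. -/
def Execution.broadcastsAt {n : ℕ} {M : Type} {G : SimpleGraph (Fin n)}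
    (e : Execution n M G) (i : Fin n) (m : M) (t : ℕ) : Prop :=
  e.lbl t = some (.broadcast i m)

/-- `p_i` toco-delivers `m` at time `t`. -/
def Execution.deliversAt {n : ℕ} {M : Type} {G : SimpleGraph (Fin n)}
    (e : Execution n M G) (i : Fin n) (m : M) (t : ℕ) : Prop :=
  ∃ tp : Tuple n M, tp.msg = m ∧ e.lbl t = some (.deliver i tp)

/-- The message causal order `⇝_M` of the execution: generated by (i) `m1`
toco-broadcast before `m2` by the same process, (ii) `m1` toco-delivered by a
process before that process toco-broadcasts `m2`, and transitivity. -/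
inductive Execution.MsgCausal {n : ℕ} {M : Type} {G : SimpleGraph (Fin n)}
    (e : Execution n M G) : M → M → Prop
  | sameProc {i : Fin n} {m1 m2 : M} {t1 t2 : ℕ} :
      t1 < t2 → e.broadcastsAt i m1 t1 → e.broadcastsAt i m2 t2 → e.MsgCausal m1 m2
  | delivered {i : Fin n} {m1 m2 : M} {t1 t2 : ℕ} :
      t1 < t2 → e.deliversAt i m1 t1 → e.broadcastsAt i m2 t2 → e.MsgCausal m1 m2
  | trans {m1 m2 m3 : M} : e.MsgCausal m1 m2 → e.MsgCausal m2 m3 → e.MsgCausal m1 m3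

/-- The delivery condition of the background task of `p_i` is enabled. -/
def Deliverable {n : ℕ} {M : Type} (G : SimpleGraph (Fin n)) (e : Execution n M G)
    (i : Fin n) (t : ℕ) : Prop :=
  ∃ tp : Tuple n M, inT2 G (e.cfg t) i tp

/-- Fairness assumptions of the model: channels are reliable (a protocol message
in transit is eventually received) and the background task of each process is
eventually executed whenever it stays enabled. -/
structure Fair {n : ℕ} {M : Type} {G : SimpleGraph (Fin n)} (e : Execution n M G) : Prop where
  recvFair : ∀ t (i j : Fin n), (e.cfg t).chan j i ≠ [] →
    ∃ t', t ≤ t' ∧ (e.lbl t' = some (.recvToco i j) ∨ e.lbl t' = some (.recvCatchup i j))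
  deliverFair : ∀ t (i : Fin n), (∀ t', t ≤ t' → Deliverable G e i t') →
    ∃ t', t ≤ t' ∧ ∃ tp : Tuple n M, e.lbl t' = some (.deliver i tp)

section Aux
open Classical
variable {n : ℕ} {M : Type} {G : SimpleGraph (Fin n)}

/-- Value carried by a protocol message. -/
def pval : PMsg n M → ℕ
  | .tocobc tp => tp.stot
  | .catchup d _ => d

/-- Sender of a protocol message. -/
def psender : PMsg n M → Fin n
  | .tocobc tp => tp.sender
  | .catchup _ s => s

/-- The tuple created by `TOCO_broadcast(m)` at `p_i` in configuration `c`. -/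
def bcTuple (c : Config n M) (i : Fin n) (m : M) : Tuple n M :=
  ⟨m, (c.proc i).causal, (c.proc i).total i + 1, i⟩

/-- Explicit characterization of the possible transitions. -/
def StepSpec (G : SimpleGraph (Fin n)) (c : Config n M) :
    Option (Label n M) → Config n M → Prop
  | none, c' => c' = c
  | some (.broadcast i m), c' => c' =
      { proc := Function.update c.proc i
          { causal := Function.update (c.proc i).causal i ((c.proc i).causal i + 1)
            total := Function.update (c.proc i).total i ((c.proc i).total i + 1)
            pending := insert (bcTuple c i m) (c.proc i).pending }
        chan := fun a b =>
          if a = i ∧ b ≠ i then c.chan a b ++ [PMsg.tocobc (bcTuple c i m)]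
          else c.chan a b }
  | some (.recvToco i j), c' => ∃ (tp : Tuple n M) (rest : List (PMsg n M)),
      c.chan j i = PMsg.tocobc tp :: rest ∧ c' =
      { proc := Function.update c.proc i
          { causal := (c.proc i).causal
            total :=
              if (c.proc i).total i ≤ tp.stot then
                Function.update (Function.update (c.proc i).total tp.sender tp.stot) i
                  (tp.stot + 1)
              else Function.update (c.proc i).total tp.sender tp.stot
            pending := insert tp (c.proc i).pending }
        chan := fun a b =>
          if a = j ∧ b = i then rest
          else if (c.proc i).total i ≤ tp.stot ∧ a = i ∧ b ≠ i then
            c.chan a b ++ [PMsg.catchup (tp.stot + 1) i]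
          else c.chan a b }
  | some (.recvCatchup i j), c' => ∃ (d : ℕ) (s : Fin n) (rest : List (PMsg n M)),
      c.chan j i = PMsg.catchup d s :: rest ∧ c' =
      { proc := Function.update c.proc i
          { causal := (c.proc i).causal
            total := Function.update (c.proc i).total s d
            pending := (c.proc i).pending }
        chan := fun a b => if a = j ∧ b = i then rest else c.chan a b }
  | some (.deliver i tp), c' => inT2 G c i tp ∧
      (∀ tp', inT2 G c i tp' → tsLe (tp.stot, tp.sender) (tp'.stot, tp'.sender)) ∧ c' =
      { proc := Function.update c.proc i
          { causal :=
              if tp.sender = i then (c.proc i).causal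
              else Function.update (c.proc i).causal tp.sender
                     ((c.proc i).causal tp.sender + 1)
            total := (c.proc i).total
            pending := (c.proc i).pending \ {tp} }
        chan := c.chan }

theorem optStep_spec {c c' : Config n M} {l : Option (Label n M)}
    (h : OptStep G c l c') : StepSpec G c l c' := by
  cases l with
  | none => exact h
  | some l =>
    cases h with
    | broadcast i m => rfl
    | recvToco i j tp rest hhead => exact ⟨tp, rest, hhead, rfl⟩
    | recvCatchup i j d s rest hhead => exact ⟨d, s, rest, hhead, rfl⟩
    | deliver i tp hT2 hmin => exact ⟨hT2, hmin, rfl⟩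

/-- State invariant of Algorithm 1. -/
structure SInv (c : Config n M) : Prop where
  selfchan : ∀ i, c.chan i i = []
  sender : ∀ j i p, p ∈ c.chan j i → psender p = j
  chain : ∀ j i, List.Chain (· < ·) ((c.proc i).total j) ((c.chan j i).map pval)
  last : ∀ j i, i ≠ j →
    ((c.chan j i).map pval).getLastD ((c.proc i).total j) = (c.proc j).total j

theorem sinv_init : SInv (initConfig n M) := by
  refine ⟨fun i => rfl, ?_, ?_, ?_⟩ <;> intro j i <;> simp [initConfig, List.Chain.nil]

theorem chain_cons_iff {R : ℕ → ℕ → Prop} {a b : ℕ} {l : List ℕ} :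
    List.Chain R a (b :: l) ↔ R a b ∧ List.Chain R b l := List.isChain_cons_cons

theorem chain_append_singleton {a x : ℕ} {l : List ℕ}
    (h : List.Chain (· < ·) a l) (hx : l.getLastD a < x) :
    List.Chain (· < ·) a (l ++ [x]) := by
  induction l generalizing a with
  | nil => simpa [chain_cons_iff, List.Chain.nil] using hx
  | cons b t ih =>
    rw [chain_cons_iff] at h
    rw [List.cons_append, chain_cons_iff]
    exact ⟨h.1, ih h.2 (by rwa [List.getLastD_cons] at hx)⟩

end Aux
section Aux2
open Classical
variable {n : ℕ} {M : Type} {G : SimpleGraph (Fin n)}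

/-- The `total` function after a `recvToco` step. -/
def rtTotal (f : Fin n → ℕ) (tp : Tuple n M) (i : Fin n) : Fin n → ℕ :=
  if f i ≤ tp.stot then
    Function.update (Function.update f tp.sender tp.stot) i (tp.stot + 1)
  else Function.update f tp.sender tp.stot

theorem rtTotal_sender {f : Fin n → ℕ} {tp : Tuple n M} {i : Fin n} (h : tp.sender ≠ i) :
    rtTotal f tp i tp.sender = tp.stot := by
  unfold rtTotal; split_ifs
  · rw [Function.update_of_ne h, Function.update_self]
  · rw [Function.update_self]

theorem rtTotal_other {f : Fin n → ℕ} {tp : Tuple n M} {i k : Fin n}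
    (h1 : k ≠ i) (h2 : k ≠ tp.sender) : rtTotal f tp i k = f k := by
  unfold rtTotal; split_ifs
  · rw [Function.update_of_ne h1, Function.update_of_ne h2]
  · rw [Function.update_of_ne h2]

theorem rtTotal_self_le {f : Fin n → ℕ} {tp : Tuple n M} {i : Fin n}
    (h : f i ≤ tp.stot) : rtTotal f tp i i = tp.stot + 1 := by
  unfold rtTotal; rw [if_pos h, Function.update_self]

theorem rtTotal_self_gt {f : Fin n → ℕ} {tp : Tuple n M} {i : Fin n}
    (h : ¬ f i ≤ tp.stot) (h2 : tp.sender ≠ i) : rtTotal f tp i i = f i := by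
  unfold rtTotal; rw [if_neg h, Function.update_of_ne (Ne.symm h2)]

theorem rtTotal_ge {f : Fin n → ℕ} {tp : Tuple n M} {i k : Fin n}
    (hlt : f tp.sender < tp.stot) (h2 : tp.sender ≠ i) : f k ≤ rtTotal f tp i k := by
  by_cases hk : k = tp.sender
  · subst hk; rw [rtTotal_sender h2]; exact le_of_lt hlt
  · by_cases hki : k = i
    · subst hki
      by_cases hle : f k ≤ tp.stot
      · rw [rtTotal_self_le hle]; omega
      · rw [rtTotal_self_gt hle h2]
    · rw [rtTotal_other hki hk]

theorem SInv.step {c c' : Config n M} {l : Option (Label n M)}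
    (hc : SInv c) (h : OptStep G c l c') : SInv c' := by
  have hspec := optStep_spec (G := G) h
  cases l with
  | none => rw [show c' = c from hspec]; exact hc
  | some l =>
  cases l with
  | broadcast i m =>
    simp only [StepSpec] at hspec
    subst hspec
    constructor
    · intro a
      simp only
      rw [if_neg (fun h => h.2 h.1)]
      exact hc.selfchan a
    · intro j i' p hp
      simp only at hp
      by_cases hji : j = i ∧ i' ≠ i
      · rw [if_pos hji] at hp
        rcases List.mem_append.1 hp with h | h
        · exact hc.sender j i' p h
        · simp at h; subst h; simp [psender, bcTuple, hji.1]
      · rw [if_neg hji] at hp; exact hc.sender j i' p hp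
    · intro j i'
      simp only [Function.update_apply]
      by_cases hji : j = i ∧ i' ≠ i
      · rw [if_pos hji, if_neg hji.2]
        try dsimp only
        rw [List.map_append]
        refine chain_append_singleton (hc.chain j i') ?_
        have := hc.last j i' (by rw [hji.1]; exact hji.2)
        rw [this, hji.1]
        simp [pval, bcTuple]
      · rw [if_neg hji]
        by_cases hi : i' = i
        · rw [if_pos hi]
          try dsimp only
          by_cases hj : j = i
          · rw [hj, hi, hc.selfchan i]
            simp [List.Chain.nil]
          · rw [Function.update_of_ne hj, ← hi]
            exact hc.chain j i'
        · rw [if_neg hi]; exact hc.chain j i'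
    · intro j i' hij
      simp only [Function.update_apply]
      by_cases hji : j = i ∧ i' ≠ i
      · rw [if_pos hji, if_neg hji.2, if_pos hji.1, List.map_append]
        simp only [List.map_cons, List.map_nil, List.getLastD_concat]
        try dsimp only
        rw [hji.1, Function.update_self]
        rfl
      · rw [if_neg hji]
        have hj : j ≠ i := by
          intro hj
          exact hji ⟨hj, fun h => hij (h.trans hj.symm)⟩
        rw [if_neg hj]
        by_cases hi : i' = i
        · rw [if_pos hi]
          try dsimp only
          rw [Function.update_of_ne hj, ← hi]
          exact hc.last j i' hij
        · rw [if_neg hi]; exact hc.last j i' hij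
  | recvToco i j0 =>
    simp only [StepSpec] at hspec
    obtain ⟨tp, rest, hhead, rfl⟩ := hspec
    have hsend : tp.sender = j0 :=
      hc.sender j0 i (PMsg.tocobc tp) (by rw [hhead]; exact List.mem_cons_self)
    have hji : j0 ≠ i := by
      intro hji; subst hji
      rw [hc.selfchan j0] at hhead; exact nomatch hhead
    have hsi : tp.sender ≠ i := hsend ▸ hji
    have hchain0 := hc.chain j0 i
    rw [hhead] at hchain0
    simp only [List.map_cons, chain_cons_iff] at hchain0
    have hT : ∀ k, (if (c.proc i).total i ≤ tp.stot then
        Function.update (Function.update (c.proc i).total tp.sender tp.stot) i (tp.stot + 1)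
      else Function.update (c.proc i).total tp.sender tp.stot) k
        = rtTotal ((c.proc i).total) tp i k := fun _ => rfl
    constructor
    · intro a
      simp only
      rw [if_neg (fun h => hji (h.1.symm.trans h.2)), if_neg (fun h => h.2.2 h.2.1)]
      exact hc.selfchan a
    · intro j i' p hp
      simp only at hp
      by_cases h1 : j = j0 ∧ i' = i
      · rw [if_pos h1] at hp
        refine hc.sender j i' p ?_
        rw [h1.1, h1.2, hhead]; exact List.mem_cons_of_mem _ hp
      · rw [if_neg h1] at hp
        by_cases h2 : (c.proc i).total i ≤ tp.stot ∧ j = i ∧ i' ≠ i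
        · rw [if_pos h2] at hp
          rcases List.mem_append.1 hp with h | h
          · exact hc.sender j i' p h
          · simp at h; subst h; simp [psender, h2.2.1]
        · rw [if_neg h2] at hp; exact hc.sender j i' p hp
    · intro j i'
      simp only [Function.update_apply]
      by_cases h1 : j = j0 ∧ i' = i
      · rw [if_pos h1, if_pos h1.2]
        try dsimp only
        rw [hT j]
        have hv : rtTotal ((c.proc i).total) tp i j = tp.stot := by
          rw [h1.1, ← hsend]; exact rtTotal_sender hsi
        rw [hv]
        exact hchain0.2
      · rw [if_neg h1]
        by_cases h2 : (c.proc i).total i ≤ tp.stot ∧ j = i ∧ i' ≠ i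
        · rw [if_pos h2, if_neg h2.2.2, List.map_append]
          simp only [List.map_cons, List.map_nil]
          refine chain_append_singleton (hc.chain j i') ?_
          have hl := hc.last j i' (by rw [h2.2.1]; exact h2.2.2)
          rw [hl, h2.2.1]
          exact Nat.lt_succ_of_le h2.1
        · rw [if_neg h2]
          by_cases hi : i' = i
          · rw [if_pos hi]
            try dsimp only
            rw [hT j]
            by_cases hjq : j = i
            · rw [hjq, hi, hc.selfchan i]; simp [List.Chain.nil]
            · have hjj0 : j ≠ j0 := fun h => h1 ⟨h, hi⟩
              rw [rtTotal_other hjq (hsend ▸ hjj0), ← hi]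
              exact hc.chain j i'
          · rw [if_neg hi]; exact hc.chain j i'
    · intro j i' hij
      simp only [Function.update_apply]
      by_cases h1 : j = j0 ∧ i' = i
      · rw [if_pos h1, if_pos h1.2]
        try dsimp only
        rw [hT j]
        have hv : rtTotal ((c.proc i).total) tp i j = tp.stot := by
          rw [h1.1, ← hsend]; exact rtTotal_sender hsi
        rw [hv]
        have hjne : ¬ j = i := fun h => hji (h1.1.symm.trans h)
        rw [if_neg hjne]
        have hlast := hc.last j i' hij
        rw [h1.2, h1.1, hhead] at hlast
        simp only [List.map_cons, List.getLastD_cons] at hlast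
        rw [h1.1]
        simpa [pval] using hlast
      · rw [if_neg h1]
        by_cases h2 : (c.proc i).total i ≤ tp.stot ∧ j = i ∧ i' ≠ i
        · rw [if_pos h2, if_neg h2.2.2, if_pos h2.2.1, List.map_append]
          simp only [List.map_cons, List.map_nil, List.getLastD_concat]
          try dsimp only
          rw [hT j]
          have hv : rtTotal ((c.proc i).total) tp i j = tp.stot + 1 := by
            rw [h2.2.1]; exact rtTotal_self_le h2.1
          rw [hv]
          rfl
        · rw [if_neg h2]
          by_cases hj : j = i
          · rw [if_pos hj]
            try dsimp only
            rw [hT j]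
            have hi' : i' ≠ i := fun h => hij (h.trans hj.symm)
            have hcond : ¬ (c.proc i).total i ≤ tp.stot := by
              intro hle; exact h2 ⟨hle, hj, hi'⟩
            rw [if_neg hi', hj, rtTotal_self_gt hcond hsi, ← hj]
            exact hc.last j i' hij
          · rw [if_neg hj]
            by_cases hi : i' = i
            · rw [if_pos hi]
              try dsimp only
              rw [hT j]
              have hjj0 : j ≠ j0 := fun h => h1 ⟨h, hi⟩
              rw [rtTotal_other hj (hsend ▸ hjj0), ← hi]
              exact hc.last j i' hij
            · rw [if_neg hi]; exact hc.last j i' hij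
  | recvCatchup i j0 =>
    simp only [StepSpec] at hspec
    obtain ⟨d, s, rest, hhead, rfl⟩ := hspec
    have hsend : s = j0 :=
      hc.sender j0 i (PMsg.catchup d s) (by rw [hhead]; exact List.mem_cons_self)
    subst hsend
    have hji : s ≠ i := by
      intro hji; subst hji
      rw [hc.selfchan s] at hhead; exact nomatch hhead
    have hchain0 := hc.chain s i
    rw [hhead] at hchain0
    simp only [List.map_cons, chain_cons_iff] at hchain0
    constructor
    · intro a
      simp only
      rw [if_neg (fun h => hji (h.1.symm.trans h.2))]
      exact hc.selfchan a
    · intro j i' p hp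
      simp only at hp
      by_cases h1 : j = s ∧ i' = i
      · rw [if_pos h1] at hp
        refine hc.sender j i' p ?_
        rw [h1.1, h1.2, hhead]; exact List.mem_cons_of_mem _ hp
      · rw [if_neg h1] at hp; exact hc.sender j i' p hp
    · intro j i'
      simp only [Function.update_apply]
      by_cases h1 : j = s ∧ i' = i
      · rw [if_pos h1, if_pos h1.2]
        try dsimp only
        rw [h1.1, Function.update_self]
        exact hchain0.2
      · rw [if_neg h1]
        by_cases hi : i' = i
        · rw [if_pos hi]
          try dsimp only
          have hj : j ≠ s := fun h => h1 ⟨h, hi⟩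
          rw [Function.update_of_ne hj, ← hi]
          exact hc.chain j i'
        · rw [if_neg hi]; exact hc.chain j i'
    · intro j i' hij
      simp only [Function.update_apply]
      by_cases h1 : j = s ∧ i' = i
      · rw [if_pos h1, if_pos h1.2]
        try dsimp only
        rw [h1.1, Function.update_self, if_neg hji]
        have hlast := hc.last j i' hij
        rw [h1.2, h1.1, hhead] at hlast
        simp only [List.map_cons, List.getLastD_cons] at hlast
        simpa [pval] using hlast
      · rw [if_neg h1]
        by_cases hi : i' = i
        · rw [if_pos hi]
          try dsimp only
          have hj : j ≠ s := fun h => h1 ⟨h, hi⟩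
          have hjq : ¬ j = i := fun h => hij (hi.trans h.symm)
          rw [if_neg hjq, Function.update_of_ne hj, ← hi]
          exact hc.last j i' hij
        · rw [if_neg hi]
          by_cases hjq : j = i
          · rw [if_pos hjq, hjq]
            try dsimp only
            rw [Function.update_of_ne (Ne.symm hji)]
            exact hc.last i i' hi
          · rw [if_neg hjq]; exact hc.last j i' hij
  | deliver i tp =>
    simp only [StepSpec] at hspec
    obtain ⟨-, -, rfl⟩ := hspec
    have hT : ∀ i' k, (Function.update c.proc i
        { causal := if tp.sender = i then (c.proc i).causal
            else Function.update (c.proc i).causal tp.sender ((c.proc i).causal tp.sender + 1)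
          total := (c.proc i).total
          pending := (c.proc i).pending \ {tp} } i').total k = (c.proc i').total k := by
      intro i' k
      by_cases hi : i' = i
      · rw [hi, Function.update_self]
      · rw [Function.update_of_ne hi]
    constructor
    · intro a; exact hc.selfchan a
    · intro j i' p hp; exact hc.sender j i' p hp
    · intro j i'
      simp only
      rw [hT i' j]
      exact hc.chain j i'
    · intro j i' hij
      simp only
      rw [hT i' j, hT j j]
      exact hc.last j i' hij

end Aux2
section Exec
open Classical
variable {n : ℕ} {M : Type} {G : SimpleGraph (Fin n)} (e : Execution n M G)

/-- Pending set of `p_i` at time `t`. -/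
def pend (t : ℕ) (i : Fin n) : Set (Tuple n M) := ((e.cfg t).proc i).pending
/-- `total_i[k]` at time `t`. -/
def tot (t : ℕ) (i k : Fin n) : ℕ := ((e.cfg t).proc i).total k
/-- `causal_i[k]` at time `t`. -/
def caus (t : ℕ) (i k : Fin n) : ℕ := ((e.cfg t).proc i).causal k

theorem sinv_all : ∀ t, SInv (e.cfg t)
  | 0 => e.init ▸ sinv_init
  | (t+1) => (sinv_all t).step (e.steps t)

theorem spec_all (t : ℕ) : StepSpec G (e.cfg t) (e.lbl t) (e.cfg (t+1)) :=
  optStep_spec (e.steps t)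

theorem total_mono_step (t : ℕ) (i k : Fin n) : tot e t i k ≤ tot e (t+1) i k := by
  have hspec := spec_all e t
  have hs := sinv_all e t
  unfold tot
  cases hl : e.lbl t with
  | none => rw [hl] at hspec; simp only [StepSpec] at hspec; rw [hspec]
  | some l =>
    rw [hl] at hspec
    cases l with
    | broadcast i0 m =>
      simp only [StepSpec] at hspec; rw [hspec]
      simp only [Function.update_apply]
      by_cases hi : i = i0
      · rw [if_pos hi, hi]
        try dsimp only
        by_cases hk : k = i0
        · rw [hk, Function.update_self]; exact Nat.le_succ _
        · rw [Function.update_of_ne hk]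
      · rw [if_neg hi]
    | recvToco i0 j0 =>
      simp only [StepSpec] at hspec
      obtain ⟨tp, rest, hhead, hcfg⟩ := hspec
      rw [hcfg]
      have hsend : tp.sender = j0 :=
        hs.sender j0 i0 (PMsg.tocobc tp) (by rw [hhead]; exact List.mem_cons_self)
      have hji : j0 ≠ i0 := by
        intro hji; rw [hji, hs.selfchan i0] at hhead; exact nomatch hhead
      have hchain0 := hs.chain j0 i0
      rw [hhead] at hchain0
      simp only [List.map_cons, chain_cons_iff] at hchain0
      simp only [Function.update_apply]
      by_cases hi : i = i0
      · rw [if_pos hi, hi]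
        try dsimp only
        exact rtTotal_ge (hsend ▸ hchain0.1) (hsend ▸ hji)
      · rw [if_neg hi]
    | recvCatchup i0 j0 =>
      simp only [StepSpec] at hspec
      obtain ⟨d, s, rest, hhead, hcfg⟩ := hspec
      rw [hcfg]
      have hsend : s = j0 :=
        hs.sender j0 i0 (PMsg.catchup d s) (by rw [hhead]; exact List.mem_cons_self)
      have hchain0 := hs.chain j0 i0
      rw [hhead] at hchain0
      simp only [List.map_cons, chain_cons_iff] at hchain0
      simp only [Function.update_apply]
      by_cases hi : i = i0
      · rw [if_pos hi, hi]
        try dsimp only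
        by_cases hk : k = s
        · rw [hk, Function.update_self]
          exact le_of_lt (hsend ▸ hchain0.1)
        · rw [Function.update_of_ne hk]
      · rw [if_neg hi]
    | deliver i0 tp =>
      simp only [StepSpec] at hspec
      obtain ⟨-, -, hcfg⟩ := hspec
      rw [hcfg]
      simp only [Function.update_apply]
      by_cases hi : i = i0
      · rw [if_pos hi, hi]
      · rw [if_neg hi]

theorem total_mono (i k : Fin n) {t1 t2 : ℕ} (h : t1 ≤ t2) : tot e t1 i k ≤ tot e t2 i k := by
  induction t2 with
  | zero => rw [Nat.le_zero.1 h]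
  | succ t2 ih =>
    rcases Nat.lt_or_ge t1 (t2+1) with h' | h'
    · exact le_trans (ih (Nat.lt_succ_iff.1 h')) (total_mono_step e t2 i k)
    · rw [le_antisymm h h']

theorem causal_mono_step (t : ℕ) (i k : Fin n) : caus e t i k ≤ caus e (t+1) i k := by
  have hspec := spec_all e t
  unfold caus
  cases hl : e.lbl t with
  | none => rw [hl] at hspec; simp only [StepSpec] at hspec; rw [hspec]
  | some l =>
    rw [hl] at hspec
    cases l with
    | broadcast i0 m =>
      simp only [StepSpec] at hspec; rw [hspec]
      simp only [Function.update_apply]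
      by_cases hi : i = i0
      · rw [if_pos hi, hi]
        try dsimp only
        by_cases hk : k = i0
        · rw [hk, Function.update_self]; exact Nat.le_succ _
        · rw [Function.update_of_ne hk]
      · rw [if_neg hi]
    | recvToco i0 j0 =>
      simp only [StepSpec] at hspec
      obtain ⟨tp, rest, hhead, hcfg⟩ := hspec
      rw [hcfg]
      simp only [Function.update_apply]
      by_cases hi : i = i0
      · rw [if_pos hi, hi]
      · rw [if_neg hi]
    | recvCatchup i0 j0 =>
      simp only [StepSpec] at hspec
      obtain ⟨d, s, rest, hhead, hcfg⟩ := hspec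
      rw [hcfg]
      simp only [Function.update_apply]
      by_cases hi : i = i0
      · rw [if_pos hi, hi]
      · rw [if_neg hi]
    | deliver i0 tp =>
      simp only [StepSpec] at hspec
      obtain ⟨-, -, hcfg⟩ := hspec
      rw [hcfg]
      simp only [Function.update_apply]
      by_cases hi : i = i0
      · rw [if_pos hi, hi]
        try dsimp only
        by_cases hsd : tp.sender = i0
        · rw [if_pos hsd]
        · rw [if_neg hsd]
          by_cases hk : k = tp.sender
          · rw [hk, Function.update_self]; exact Nat.le_succ _
          · rw [Function.update_of_ne hk]
      · rw [if_neg hi]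

theorem causal_mono (i k : Fin n) {t1 t2 : ℕ} (h : t1 ≤ t2) : caus e t1 i k ≤ caus e t2 i k := by
  induction t2 with
  | zero => rw [Nat.le_zero.1 h]
  | succ t2 ih =>
    rcases Nat.lt_or_ge t1 (t2+1) with h' | h'
    · exact le_trans (ih (Nat.lt_succ_iff.1 h')) (causal_mono_step e t2 i k)
    · rw [le_antisymm h h']

end Exec
section Pend
open Classical
variable {n : ℕ} {M : Type} {G : SimpleGraph (Fin n)} (e : Execution n M G)

theorem pend_zero (i : Fin n) : pend e 0 i = ∅ := by
  unfold pend; rw [e.init]; rfl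

theorem pending_step {t : ℕ} {i : Fin n} {tp : Tuple n M} (h : tp ∈ pend e t i)
    (hne : e.lbl t ≠ some (.deliver i tp)) : tp ∈ pend e (t+1) i := by
  have hspec := spec_all e t
  unfold pend at h ⊢
  cases hl : e.lbl t with
  | none => rw [hl] at hspec; simp only [StepSpec] at hspec; rw [hspec]; exact h
  | some l =>
    rw [hl] at hspec
    cases l with
    | broadcast i0 m =>
      simp only [StepSpec] at hspec; rw [hspec]
      simp only [Function.update_apply]
      by_cases hi : i = i0
      · rw [if_pos hi]; exact Set.mem_insert_of_mem _ (hi ▸ h)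
      · rw [if_neg hi]; exact h
    | recvToco i0 j0 =>
      simp only [StepSpec] at hspec
      obtain ⟨tp0, rest, hhead, hcfg⟩ := hspec
      rw [hcfg]
      simp only [Function.update_apply]
      by_cases hi : i = i0
      · rw [if_pos hi]; exact Set.mem_insert_of_mem _ (hi ▸ h)
      · rw [if_neg hi]; exact h
    | recvCatchup i0 j0 =>
      simp only [StepSpec] at hspec
      obtain ⟨d, s, rest, hhead, hcfg⟩ := hspec
      rw [hcfg]
      simp only [Function.update_apply]
      by_cases hi : i = i0
      · rw [if_pos hi]; exact hi ▸ h
      · rw [if_neg hi]; exact h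
    | deliver i0 tp0 =>
      simp only [StepSpec] at hspec
      obtain ⟨-, -, hcfg⟩ := hspec
      rw [hcfg]
      simp only [Function.update_apply]
      by_cases hi : i = i0
      · rw [if_pos hi]
        refine ⟨hi ▸ h, ?_⟩
        intro hmem
        rw [Set.mem_singleton_iff] at hmem
        exact hne (by rw [hl, hmem, hi])
      · rw [if_neg hi]; exact h

theorem pending_persist {t t' : ℕ} {i : Fin n} {tp : Tuple n M} (h : tp ∈ pend e t i)
    (hle : t ≤ t') (hnd : ∀ u, ¬ e.lbl u = some (.deliver i tp)) : tp ∈ pend e t' i := by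
  induction t' with
  | zero => rw [Nat.le_zero.1 hle] at h; exact h
  | succ t' ih =>
    rcases Nat.lt_or_ge t (t'+1) with h' | h'
    · exact pending_step e (ih (Nat.lt_succ_iff.1 h')) (hnd t')
    · rw [← le_antisymm hle h']; exact h

/-- `tp` enters `pending_i` at time `s`. -/
def Enters (i : Fin n) (tp : Tuple n M) (s : ℕ) : Prop :=
  tp ∉ pend e s i ∧ tp ∈ pend e (s+1) i

theorem mem_entry_between {i : Fin n} {tp : Tuple n M} :
    ∀ t2, tp ∈ pend e t2 i → ∀ t1, t1 ≤ t2 → tp ∉ pend e t1 i →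
      ∃ s, t1 ≤ s ∧ s < t2 ∧ Enters e i tp s := by
  intro t2
  induction t2 with
  | zero => intro h2 t1 hle h1; rw [Nat.le_zero.1 hle] at h1; exact absurd h2 h1
  | succ t2 ih =>
    intro h2 t1 hle h1
    rcases Nat.lt_or_ge t1 (t2+1) with h' | h'
    · by_cases hmem : tp ∈ pend e t2 i
      · obtain ⟨s, hs1, hs2, hs3⟩ := ih hmem t1 (Nat.lt_succ_iff.1 h') h1
        exact ⟨s, hs1, Nat.lt_succ_of_lt hs2, hs3⟩
      · exact ⟨t2, Nat.lt_succ_iff.1 h', Nat.lt_succ_self _, hmem, h2⟩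
    · rw [← le_antisymm hle h'] at h2; exact absurd h2 h1

theorem mem_entry_exists {i : Fin n} {tp : Tuple n M} {t : ℕ} (h : tp ∈ pend e t i) :
    ∃ s, s < t ∧ Enters e i tp s := by
  obtain ⟨s, -, hs2, hs3⟩ := mem_entry_between e t h 0 (Nat.zero_le _)
    (by rw [pend_zero]; exact Set.notMem_empty _)
  exact ⟨s, hs2, hs3⟩

theorem enters_cases {i : Fin n} {tp : Tuple n M} {s : ℕ} (h : Enters e i tp s) :
    (tp.sender = i ∧ e.lbl s = some (.broadcast i tp.msg) ∧
      tp = bcTuple (e.cfg s) i tp.msg ∧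
      tp.stot = tot e s i i + 1 ∧ tot e (s+1) i i = tp.stot)
  ∨ (tp.sender ≠ i ∧ e.lbl s = some (.recvToco i tp.sender) ∧
      (∃ rest, (e.cfg s).chan tp.sender i = PMsg.tocobc tp :: rest) ∧
      tot e (s+1) i tp.sender = tp.stot ∧ tp.stot < tot e (s+1) i i) := by
  obtain ⟨h1, h2⟩ := h
  have hspec := spec_all e s
  have hs := sinv_all e s
  unfold pend at h1 h2
  cases hl : e.lbl s with
  | none =>
    rw [hl] at hspec; simp only [StepSpec] at hspec; rw [hspec] at h2
    exact absurd h2 h1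
  | some l =>
    rw [hl] at hspec
    cases l with
    | broadcast i0 m =>
      simp only [StepSpec] at hspec
      rw [hspec] at h2
      simp only [Function.update_apply] at h2
      by_cases hi : i = i0
      · subst hi
        rw [if_pos rfl] at h2
        try dsimp only at h2
        rcases Set.mem_insert_iff.1 h2 with rfl | hold
        · left
          refine ⟨rfl, rfl, rfl, rfl, ?_⟩
          unfold tot
          rw [hspec]
          try dsimp only
          rw [Function.update_self]
          try dsimp only
          rw [Function.update_self]
          rfl
        · exact absurd hold h1
      · rw [if_neg hi] at h2; exact absurd h2 h1
    | recvToco i0 j0 =>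
      simp only [StepSpec] at hspec
      obtain ⟨tp0, rest, hhead, hcfg⟩ := hspec
      rw [hcfg] at h2
      simp only [Function.update_apply] at h2
      by_cases hi : i = i0
      · subst hi
        rw [if_pos rfl] at h2
        try dsimp only at h2
        rcases Set.mem_insert_iff.1 h2 with rfl | hold
        · right
          have hsend : tp.sender = j0 :=
            hs.sender j0 i (PMsg.tocobc tp) (by rw [hhead]; exact List.mem_cons_self)
          have hji : j0 ≠ i := by
            intro hji; rw [hji, hs.selfchan i] at hhead; exact nomatch hhead
          have hsi : tp.sender ≠ i := hsend ▸ hji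
          have htot : ∀ k, tot e (s+1) i k = rtTotal ((e.cfg s).proc i).total tp i k := by
            intro k
            unfold tot
            rw [hcfg]
            try dsimp only
            rw [Function.update_self]
            rfl
          refine ⟨hsi, by rw [hsend], ⟨rest, by rw [hsend]; exact hhead⟩, ?_, ?_⟩
          · rw [htot tp.sender, rtTotal_sender hsi]
          · rw [htot i]
            by_cases hle : ((e.cfg s).proc i).total i ≤ tp.stot
            · rw [rtTotal_self_le hle]; exact Nat.lt_succ_self _
            · rw [rtTotal_self_gt hle hsi]; omega
        · exact absurd hold h1
      · rw [if_neg hi] at h2; exact absurd h2 h1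
    | recvCatchup i0 j0 =>
      simp only [StepSpec] at hspec
      obtain ⟨d, s', rest, hhead, hcfg⟩ := hspec
      rw [hcfg] at h2
      simp only [Function.update_apply] at h2
      by_cases hi : i = i0
      · subst hi
        rw [if_pos rfl] at h2
        try dsimp only at h2
        exact absurd h2 h1
      · rw [if_neg hi] at h2; exact absurd h2 h1
    | deliver i0 tp0 =>
      simp only [StepSpec] at hspec
      obtain ⟨-, -, hcfg⟩ := hspec
      rw [hcfg] at h2
      simp only [Function.update_apply] at h2
      by_cases hi : i = i0
      · subst hi
        rw [if_pos rfl] at h2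
        try dsimp only at h2
        exact absurd h2.1 h1
      · rw [if_neg hi] at h2; exact absurd h2 h1

theorem enters_unique_lt {i : Fin n} {tp : Tuple n M} {s1 s2 : ℕ}
    (h1 : Enters e i tp s1) (h2 : Enters e i tp s2) (hlt : s1 < s2) : False := by
  rcases enters_cases e h1 with ⟨hsd1, -, -, -, ht1⟩ | ⟨hsd1, -, -, ht1, -⟩ <;>
  rcases enters_cases e h2 with ⟨hsd2, -, -, ht2, -⟩ | ⟨hsd2, -, ⟨rest, hhead2⟩, -, -⟩
  · have := total_mono e i i (show s1 + 1 ≤ s2 from hlt)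
    omega
  · exact hsd2 hsd1
  · exact hsd1 hsd2
  · have hmono := total_mono e i tp.sender (show s1 + 1 ≤ s2 from hlt)
    rw [ht1] at hmono
    have hchain := (sinv_all e s2).chain tp.sender i
    rw [hhead2] at hchain
    simp only [List.map_cons, chain_cons_iff] at hchain
    have : tot e s2 i tp.sender < tp.stot := hchain.1
    unfold tot at this hmono
    omega

theorem enters_unique {i : Fin n} {tp : Tuple n M} {s1 s2 : ℕ}
    (h1 : Enters e i tp s1) (h2 : Enters e i tp s2) : s1 = s2 := by
  rcases lt_trichotomy s1 s2 with h | h | h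
  · exact absurd (enters_unique_lt e h1 h2 h) (fun f => f)
  · exact h
  · exact absurd (enters_unique_lt e h2 h1 h) (fun f => f)

/-- Timestamps identify tuples (even across time). -/
theorem ts_unique {i : Fin n} {tp1 tp2 : Tuple n M} {t1 t2 : ℕ}
    (h1 : tp1 ∈ pend e t1 i) (h2 : tp2 ∈ pend e t2 i)
    (hst : tp1.stot = tp2.stot) (hsd : tp1.sender = tp2.sender) : tp1 = tp2 := by
  obtain ⟨s1, -, he1⟩ := mem_entry_exists e h1
  obtain ⟨s2, -, he2⟩ := mem_entry_exists e h2
  rcases lt_trichotomy s1 s2 with hlt | heq | hlt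
  · -- entry of tp1 before entry of tp2
    exfalso
    rcases enters_cases e he1 with ⟨hsd1, -, -, -, ht1⟩ | ⟨hsd1, -, -, ht1, -⟩ <;>
    rcases enters_cases e he2 with ⟨hsd2, -, -, ht2, -⟩ | ⟨hsd2, -, ⟨rest, hhead2⟩, -, -⟩
    · have := total_mono e i i (show s1 + 1 ≤ s2 from hlt); omega
    · exact hsd2 (hsd.symm.trans hsd1)
    · exact hsd1 (hsd.trans hsd2)
    · have hmono := total_mono e i tp1.sender (show s1 + 1 ≤ s2 from hlt)
      rw [ht1] at hmono
      have hchain := (sinv_all e s2).chain tp2.sender i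
      rw [hhead2] at hchain
      simp only [List.map_cons, chain_cons_iff] at hchain
      have h2' : tot e s2 i tp2.sender < tp2.stot := hchain.1
      rw [← hsd, ← hst] at h2'
      unfold tot at hmono h2'
      omega
  · -- same entry time
    subst heq
    rcases enters_cases e he1 with ⟨hsd1, hl1, heq1, -, -⟩ | ⟨hsd1, hl1, ⟨r1, hh1⟩, -, -⟩ <;>
    rcases enters_cases e he2 with ⟨hsd2, hl2, heq2, -, -⟩ | ⟨hsd2, hl2, ⟨r2, hh2⟩, -, -⟩
    · have hAB := hl1.symm.trans hl2
      simp only [Option.some.injEq, Label.broadcast.injEq] at hAB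
      rw [heq1, heq2, hAB.2]
    · exact ((hsd.symm.trans hsd1) |> hsd2).elim
    · exact ((hsd.trans hsd2) |> hsd1).elim
    · rw [← hsd, hh1] at hh2
      simp only [List.cons.injEq, PMsg.tocobc.injEq] at hh2
      exact hh2.1
  · -- entry of tp2 before entry of tp1 (symmetric)
    exfalso
    rcases enters_cases e he2 with ⟨hsd2, -, -, -, ht2⟩ | ⟨hsd2, -, -, ht2, -⟩ <;>
    rcases enters_cases e he1 with ⟨hsd1, -, -, ht1, -⟩ | ⟨hsd1, -, ⟨rest, hhead1⟩, -, -⟩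
    · have := total_mono e i i (show s2 + 1 ≤ s1 from hlt); omega
    · exact hsd1 (hsd.trans hsd2)
    · exact hsd2 (hsd.symm.trans hsd1)
    · have hmono := total_mono e i tp2.sender (show s2 + 1 ≤ s1 from hlt)
      rw [ht2] at hmono
      have hchain := (sinv_all e s1).chain tp1.sender i
      rw [hhead1] at hchain
      simp only [List.map_cons, chain_cons_iff] at hchain
      have h1' : tot e s1 i tp1.sender < tp1.stot := hchain.1
      rw [hsd, hst] at h1'
      unfold tot at hmono h1'
      omega

theorem delivered_not_pending {i : Fin n} {tp : Tuple n M} {s t : ℕ}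
    (hdel : e.lbl s = some (.deliver i tp)) (hpend : tp ∈ pend e s i)
    (hlt : s < t) : tp ∉ pend e t i := by
  intro hmem
  have hgone : tp ∉ pend e (s+1) i := by
    have hspec := spec_all e s
    rw [hdel] at hspec
    simp only [StepSpec] at hspec
    obtain ⟨-, -, hcfg⟩ := hspec
    unfold pend
    rw [hcfg]
    simp only [Function.update_apply, if_pos rfl]
    intro hmem'
    exact hmem'.2 rfl
  obtain ⟨s0, hs0, he0⟩ := mem_entry_exists e hpend
  obtain ⟨s1, hs1a, -, he1⟩ := mem_entry_between e t hmem (s+1) hlt hgone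
  have := enters_unique e he0 he1
  omega

theorem deliver_time_unique {i : Fin n} {tp : Tuple n M} {s1 s2 : ℕ}
    (h1 : e.lbl s1 = some (.deliver i tp)) (h2 : e.lbl s2 = some (.deliver i tp)) :
    s1 = s2 := by
  have hp : ∀ s, e.lbl s = some (.deliver i tp) → tp ∈ pend e s i := by
    intro s hs
    have hspec := spec_all e s
    rw [hs] at hspec
    simp only [StepSpec] at hspec
    exact hspec.1.1.1.1
  rcases lt_trichotomy s1 s2 with h | h | h
  · exact absurd (hp s2 h2) (delivered_not_pending e h1 (hp s1 h1) h)
  · exact h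
  · exact absurd (hp s1 h1) (delivered_not_pending e h2 (hp s2 h2) h)

end Pend
section Chan
open Classical
variable {n : ℕ} {M : Type} {G : SimpleGraph (Fin n)} (e : Execution n M G)

/-- A receive event on the channel from `p_j` to `p_i`. -/
def RecvLbl (i j : Fin n) (t : ℕ) : Prop :=
  e.lbl t = some (.recvToco i j) ∨ e.lbl t = some (.recvCatchup i j)

theorem chan_step (t : ℕ) (j i : Fin n) :
    (RecvLbl e i j t ∧ (e.cfg (t+1)).chan j i = ((e.cfg t).chan j i).tail)
  ∨ ((¬ RecvLbl e i j t) ∧ ∃ ext, (e.cfg (t+1)).chan j i = (e.cfg t).chan j i ++ ext) := by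
  have hspec := spec_all e t
  cases hl : e.lbl t with
  | none =>
    rw [hl] at hspec; simp only [StepSpec] at hspec
    refine Or.inr ⟨?_, [], by rw [hspec, List.append_nil]⟩
    rintro (h | h) <;> rw [hl] at h <;> exact nomatch h
  | some l =>
    rw [hl] at hspec
    cases l with
    | broadcast i0 m =>
      simp only [StepSpec] at hspec
      refine Or.inr ⟨?_, ?_⟩
      · rintro (h | h) <;> rw [hl] at h <;> simp at h
      · rw [hspec]
        simp only
        by_cases hc : j = i0 ∧ i ≠ i0
        · rw [if_pos hc]; exact ⟨_, rfl⟩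
        · rw [if_neg hc]; exact ⟨[], by rw [List.append_nil]⟩
    | recvToco i0 j0 =>
      simp only [StepSpec] at hspec
      obtain ⟨tp, rest, hhead, hcfg⟩ := hspec
      by_cases hc : j = j0 ∧ i = i0
      · refine Or.inl ⟨Or.inl (by rw [hl, hc.1, hc.2]), ?_⟩
        rw [hcfg]
        simp only
        rw [if_pos hc, hc.1, hc.2, hhead, List.tail_cons]
      · refine Or.inr ⟨?_, ?_⟩
        · rintro (h | h) <;> rw [hl] at h <;> simp at h
          · exact hc ⟨h.2.symm, h.1.symm⟩
        · rw [hcfg]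
          simp only
          rw [if_neg hc]
          by_cases hc2 : ((e.cfg t).proc i0).total i0 ≤ tp.stot ∧ j = i0 ∧ i ≠ i0
          · rw [if_pos hc2]; exact ⟨_, rfl⟩
          · rw [if_neg hc2]; exact ⟨[], by rw [List.append_nil]⟩
    | recvCatchup i0 j0 =>
      simp only [StepSpec] at hspec
      obtain ⟨d, s, rest, hhead, hcfg⟩ := hspec
      by_cases hc : j = j0 ∧ i = i0
      · refine Or.inl ⟨Or.inr (by rw [hl, hc.1, hc.2]), ?_⟩
        rw [hcfg]
        simp only
        rw [if_pos hc, hc.1, hc.2, hhead, List.tail_cons]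
      · refine Or.inr ⟨?_, ?_⟩
        · rintro (h | h) <;> rw [hl] at h <;> simp at h
          · exact hc ⟨h.2.symm, h.1.symm⟩
        · rw [hcfg]
          simp only
          rw [if_neg hc]
          exact ⟨[], by rw [List.append_nil]⟩
    | deliver i0 tp =>
      simp only [StepSpec] at hspec
      obtain ⟨-, -, hcfg⟩ := hspec
      refine Or.inr ⟨?_, [], by rw [hcfg, List.append_nil]⟩
      rintro (h | h) <;> rw [hl] at h <;> simp at h

theorem no_recv_stable {j i : Fin n} :
    ∀ (t d : ℕ), (∀ u, t ≤ u → u < t + d → ¬ RecvLbl e i j u) →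
      ∃ ext, (e.cfg (t+d)).chan j i = (e.cfg t).chan j i ++ ext := by
  intro t d
  induction d with
  | zero => intro _; exact ⟨[], by rw [Nat.add_zero, List.append_nil]⟩
  | succ d ih =>
    intro hno
    obtain ⟨ext, hext⟩ := ih (fun u h1 h2 => hno u h1 (by omega))
    rcases chan_step e (t+d) j i with ⟨hr, -⟩ | ⟨-, ext2, hext2⟩
    · exact absurd hr (hno (t+d) (by omega) (by omega))
    · exact ⟨ext ++ ext2, by rw [← Nat.add_assoc, hext2, hext, List.append_assoc]⟩

theorem first_recv (hf : Fair e) {j i : Fin n} {t : ℕ} (h : (e.cfg t).chan j i ≠ []) :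
    ∃ t', t ≤ t' ∧ RecvLbl e i j t' ∧ ∀ u, t ≤ u → u < t' → ¬ RecvLbl e i j u := by
  obtain ⟨t0, ht0, hr0⟩ := hf.recvFair t i j h
  have hex : ∃ d, RecvLbl e i j (t + d) := ⟨t0 - t, by rwa [Nat.add_sub_cancel' ht0]⟩
  classical
  let d0 := Nat.find hex
  refine ⟨t + d0, Nat.le_add_right _ _, Nat.find_spec hex, ?_⟩
  intro u h1 h2 hu
  have := Nat.find_min hex (m := u - t) (by omega)
  exact this (by rwa [Nat.add_sub_cancel' h1])

theorem process_at (hf : Fair e) {j i : Fin n} :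
    ∀ (pre : List (PMsg n M)) (t : ℕ) (p : PMsg n M) (suf : List (PMsg n M)),
      (e.cfg t).chan j i = pre ++ p :: suf →
      ∃ t' suf', t ≤ t' ∧ RecvLbl e i j t' ∧ (e.cfg t').chan j i = p :: suf' := by
  intro pre
  induction pre with
  | nil =>
    intro t p suf hchan
    obtain ⟨t', ht', hr', hmin⟩ := first_recv e hf (j := j) (i := i)
      (by rw [hchan]; simp)
    obtain ⟨ext, hext⟩ := no_recv_stable e t (t' - t)
      (fun u h1 h2 => hmin u h1 (by omega))
    rw [Nat.add_sub_cancel' ht'] at hext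
    rw [hchan] at hext
    exact ⟨t', suf ++ ext, ht', hr', by rw [hext]; simp⟩
  | cons q pre' ih =>
    intro t p suf hchan
    obtain ⟨t', ht', hr', hmin⟩ := first_recv e hf (j := j) (i := i)
      (by rw [hchan]; simp)
    obtain ⟨ext, hext⟩ := no_recv_stable e t (t' - t)
      (fun u h1 h2 => hmin u h1 (by omega))
    rw [Nat.add_sub_cancel' ht'] at hext
    rw [hchan] at hext
    rcases chan_step e t' j i with ⟨-, htail⟩ | ⟨hno, -⟩
    · rw [hext] at htail
      have : (e.cfg (t'+1)).chan j i = pre' ++ p :: (suf ++ ext) := by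
        rw [htail]; simp
      obtain ⟨t'', suf', ht'', hr'', hchan''⟩ := ih (t'+1) p (suf ++ ext) this
      exact ⟨t'', suf', by omega, hr'', hchan''⟩
    · exact absurd hr' hno

theorem toco_processed (hf : Fair e) {t : ℕ} {j i : Fin n} {tp : Tuple n M}
    (h : PMsg.tocobc tp ∈ (e.cfg t).chan j i) :
    ∃ t', t ≤ t' ∧ tp ∈ pend e (t'+1) i ∧ tp.stot < tot e (t'+1) i i := by
  obtain ⟨pre, suf, hdecomp⟩ := List.append_of_mem h
  obtain ⟨t', suf', ht', hr', hchan'⟩ := process_at e hf pre t _ suf hdecomp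
  have hspec := spec_all e t'
  rcases hr' with hr | hr
  · rw [hr] at hspec
    simp only [StepSpec] at hspec
    obtain ⟨tp0, rest, hhead, hcfg⟩ := hspec
    rw [hchan'] at hhead
    have htp : tp0 = tp := by
      have := (List.cons.inj hhead.symm).1
      injection this
    subst htp
    have hs := sinv_all e t'
    have hji : j ≠ i := by
      intro hji
      rw [hji, hs.selfchan i] at hchan'
      exact nomatch hchan'
    have hsend : tp0.sender = j :=
      hs.sender j i (PMsg.tocobc tp0) (by rw [hchan']; exact List.mem_cons_self)
    have hsi : tp0.sender ≠ i := hsend ▸ hji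
    refine ⟨t', ht', ?_, ?_⟩
    · unfold pend
      rw [hcfg]
      try dsimp only
      rw [Function.update_self]
      exact Set.mem_insert _ _
    · unfold tot
      rw [hcfg]
      try dsimp only
      rw [Function.update_self]
      try dsimp only
      by_cases hle : ((e.cfg t').proc i).total i ≤ tp0.stot
      · rw [show (if ((e.cfg t').proc i).total i ≤ tp0.stot then
            Function.update (Function.update ((e.cfg t').proc i).total tp0.sender tp0.stot) i
              (tp0.stot + 1)
          else Function.update ((e.cfg t').proc i).total tp0.sender tp0.stot) i
            = rtTotal ((e.cfg t').proc i).total tp0 i i from rfl, rtTotal_self_le hle]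
        exact Nat.lt_succ_self _
      · rw [show (if ((e.cfg t').proc i).total i ≤ tp0.stot then
            Function.update (Function.update ((e.cfg t').proc i).total tp0.sender tp0.stot) i
              (tp0.stot + 1)
          else Function.update ((e.cfg t').proc i).total tp0.sender tp0.stot) i
            = rtTotal ((e.cfg t').proc i).total tp0 i i from rfl, rtTotal_self_gt hle hsi]
        omega
  · rw [hr] at hspec
    simp only [StepSpec] at hspec
    obtain ⟨d, s, rest, hhead, -⟩ := hspec
    rw [hchan'] at hhead
    have := (List.cons.inj hhead.symm).1
    exact nomatch this

theorem tot_reaches (hf : Fair e) (t : ℕ) (j k : Fin n) :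
    ∃ t', t ≤ t' ∧ tot e t k k ≤ tot e t' j k := by
  by_cases hjk : j = k
  · exact ⟨t, le_rfl, by rw [hjk]⟩
  · by_cases hchan : (e.cfg t).chan k j = []
    · have := (sinv_all e t).last k j hjk
      rw [hchan] at this
      simp only [List.map_nil, List.getLastD_nil] at this
      exact ⟨t, le_rfl, by unfold tot; rw [this]⟩
    · have hdecomp := (List.dropLast_append_getLast hchan).symm
      obtain ⟨t', suf', ht', hr', hchan'⟩ :=
        process_at e hf ((e.cfg t).chan k j).dropLast t _ [] (by rw [← hdecomp])
      have hpv : pval (((e.cfg t).chan k j).getLast hchan) = tot e t k k := by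
        have hlast := (sinv_all e t).last k j hjk
        rw [hdecomp, List.map_append] at hlast
        simp only [List.map_cons, List.map_nil, List.getLastD_concat] at hlast
        exact hlast
      have hspec := spec_all e t'
      have hs' := sinv_all e t'
      rcases hr' with hr | hr
      · rw [hr] at hspec
        simp only [StepSpec] at hspec
        obtain ⟨tp0, rest, hhead, hcfg⟩ := hspec
        rw [hchan'] at hhead
        have htp : PMsg.tocobc tp0 = ((e.cfg t).chan k j).getLast hchan :=
          (List.cons.inj hhead.symm).1
        have hsend : tp0.sender = k :=
          hs'.sender k j (PMsg.tocobc tp0) (by rw [hchan', ← htp]; exact List.mem_cons_self)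
        have hji : k ≠ j := fun h => hjk h.symm
        refine ⟨t' + 1, by omega, ?_⟩
        unfold tot
        rw [hcfg]
        try dsimp only
        rw [Function.update_self]
        try dsimp only
        have : (if ((e.cfg t').proc j).total j ≤ tp0.stot then
            Function.update (Function.update ((e.cfg t').proc j).total tp0.sender tp0.stot) j
              (tp0.stot + 1)
          else Function.update ((e.cfg t').proc j).total tp0.sender tp0.stot) k
            = rtTotal ((e.cfg t').proc j).total tp0 j k := rfl
        rw [this, ← hsend, rtTotal_sender (hsend ▸ hji)]
        have : pval (PMsg.tocobc tp0) = tot e t k k := by rw [htp]; exact hpv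
        simp only [pval] at this
        rw [this, hsend]
        exact le_rfl
      · rw [hr] at hspec
        simp only [StepSpec] at hspec
        obtain ⟨d, s, rest, hhead, hcfg⟩ := hspec
        rw [hchan'] at hhead
        have htp : PMsg.catchup d s = ((e.cfg t).chan k j).getLast hchan :=
          (List.cons.inj hhead.symm).1
        have hsend : s = k :=
          hs'.sender k j (PMsg.catchup d s) (by rw [hchan', ← htp]; exact List.mem_cons_self)
        refine ⟨t' + 1, by omega, ?_⟩
        unfold tot
        rw [hcfg]
        try dsimp only
        rw [Function.update_self]
        try dsimp only
        rw [← hsend, Function.update_self]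
        have : pval (M := M) (PMsg.catchup d s) = tot e t k k := by rw [htp]; exact hpv
        simp only [pval] at this
        rw [this, hsend]
        exact le_rfl

theorem tot_reaches_forever (hf : Fair e) (t : ℕ) (j k : Fin n) :
    ∃ t', t ≤ t' ∧ ∀ u, t' ≤ u → tot e t k k ≤ tot e u j k := by
  obtain ⟨t', ht', hle⟩ := tot_reaches e hf t j k
  exact ⟨t', ht', fun u hu => le_trans hle (total_mono e j k hu)⟩

end Chan
section Src
open Classical
variable {n : ℕ} {M : Type} {G : SimpleGraph (Fin n)} (e : Execution n M G)

theorem bc_effect {tb : ℕ} {i : Fin n} {m : M} (hl : e.lbl tb = some (.broadcast i m)) :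
    bcTuple (e.cfg tb) i m ∈ pend e (tb+1) i ∧
    (∀ b, b ≠ i → PMsg.tocobc (bcTuple (e.cfg tb) i m) ∈ (e.cfg (tb+1)).chan i b) ∧
    tot e (tb+1) i i = (bcTuple (e.cfg tb) i m).stot := by
  have hspec := spec_all e tb
  rw [hl] at hspec
  simp only [StepSpec] at hspec
  refine ⟨?_, ?_, ?_⟩
  · unfold pend
    rw [hspec]
    try dsimp only
    rw [Function.update_self]
    exact Set.mem_insert _ _
  · intro b hb
    rw [hspec]
    try dsimp only
    rw [if_pos ⟨rfl, hb⟩]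
    simp
  · unfold tot
    rw [hspec]
    try dsimp only
    rw [Function.update_self]
    try dsimp only
    rw [Function.update_self]
    rfl

theorem bc_stot_lt {s1 s2 : ℕ} {i : Fin n} {m1 m2 : M}
    (h1 : e.lbl s1 = some (.broadcast i m1)) (h2 : e.lbl s2 = some (.broadcast i m2))
    (hlt : s1 < s2) : (bcTuple (e.cfg s1) i m1).stot < (bcTuple (e.cfg s2) i m2).stot := by
  have hc1 := (bc_effect e h1).2.2
  have hmono := total_mono e i i (show s1 + 1 ≤ s2 from hlt)
  have : (bcTuple (e.cfg s2) i m2).stot = tot e s2 i i + 1 := rfl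
  unfold tot at *
  omega

theorem toco_in_chan_src :
    ∀ (t : ℕ) {j i : Fin n} {tp : Tuple n M}, PMsg.tocobc tp ∈ (e.cfg t).chan j i →
      ∃ s, s < t ∧ e.lbl s = some (.broadcast j tp.msg) ∧ tp = bcTuple (e.cfg s) j tp.msg := by
  intro t
  induction t with
  | zero =>
    intro j i tp h
    rw [e.init] at h
    exact absurd h List.not_mem_nil
  | succ t ih =>
    intro j i tp h
    have hspec := spec_all e t
    cases hl : e.lbl t with
    | none =>
      rw [hl] at hspec; simp only [StepSpec] at hspec
      rw [hspec] at h
      obtain ⟨s, hs, h2, h3⟩ := ih h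
      exact ⟨s, by omega, h2, h3⟩
    | some l =>
      rw [hl] at hspec
      cases l with
      | broadcast i0 m =>
        simp only [StepSpec] at hspec
        rw [hspec] at h
        simp only at h
        by_cases hc : j = i0 ∧ i ≠ i0
        · rw [if_pos hc] at h
          rcases List.mem_append.1 h with h' | h'
          · obtain ⟨s, hs, h2, h3⟩ := ih h'
            exact ⟨s, by omega, h2, h3⟩
          · simp only [List.mem_singleton] at h'
            have htp : tp = bcTuple (e.cfg t) i0 m := by injection h'
            subst htp
            refine ⟨t, Nat.lt_succ_self _, ?_, ?_⟩
            · rw [hl, hc.1]; rfl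
            · rw [hc.1]; rfl
        · rw [if_neg hc] at h
          obtain ⟨s, hs, h2, h3⟩ := ih h
          exact ⟨s, by omega, h2, h3⟩
      | recvToco i0 j0 =>
        simp only [StepSpec] at hspec
        obtain ⟨tp0, rest, hhead, hcfg⟩ := hspec
        rw [hcfg] at h
        simp only at h
        by_cases hc : j = j0 ∧ i = i0
        · rw [if_pos hc] at h
          have : PMsg.tocobc tp ∈ (e.cfg t).chan j i := by
            rw [hc.1, hc.2, hhead]
            exact List.mem_cons_of_mem _ h
          obtain ⟨s, hs, h2, h3⟩ := ih this
          exact ⟨s, by omega, h2, h3⟩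
        · rw [if_neg hc] at h
          by_cases hc2 : ((e.cfg t).proc i0).total i0 ≤ tp0.stot ∧ j = i0 ∧ i ≠ i0
          · rw [if_pos hc2] at h
            rcases List.mem_append.1 h with h' | h'
            · obtain ⟨s, hs, h2, h3⟩ := ih h'
              exact ⟨s, by omega, h2, h3⟩
            · simp only [List.mem_singleton] at h'
              exact nomatch h'
          · rw [if_neg hc2] at h
            obtain ⟨s, hs, h2, h3⟩ := ih h
            exact ⟨s, by omega, h2, h3⟩
      | recvCatchup i0 j0 =>
        simp only [StepSpec] at hspec
        obtain ⟨d, s0, rest, hhead, hcfg⟩ := hspec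
        rw [hcfg] at h
        simp only at h
        by_cases hc : j = j0 ∧ i = i0
        · rw [if_pos hc] at h
          have : PMsg.tocobc tp ∈ (e.cfg t).chan j i := by
            rw [hc.1, hc.2, hhead]
            exact List.mem_cons_of_mem _ h
          obtain ⟨s, hs, h2, h3⟩ := ih this
          exact ⟨s, by omega, h2, h3⟩
        · rw [if_neg hc] at h
          obtain ⟨s, hs, h2, h3⟩ := ih h
          exact ⟨s, by omega, h2, h3⟩
      | deliver i0 tp0 =>
        simp only [StepSpec] at hspec
        obtain ⟨-, -, hcfg⟩ := hspec
        rw [hcfg] at h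
        obtain ⟨s, hs, h2, h3⟩ := ih h
        exact ⟨s, by omega, h2, h3⟩

theorem pend_src {t : ℕ} {i : Fin n} {tp : Tuple n M} (h : tp ∈ pend e t i) :
    ∃ s, s < t ∧ e.lbl s = some (.broadcast tp.sender tp.msg) ∧
      tp = bcTuple (e.cfg s) tp.sender tp.msg := by
  obtain ⟨s0, hs0, he0⟩ := mem_entry_exists e h
  rcases enters_cases e he0 with ⟨hsd, hlbl, heq, -, -⟩ | ⟨-, -, ⟨rest, hhead⟩, -, -⟩
  · exact ⟨s0, by omega, by rw [hsd]; exact hlbl, by rw [hsd]; exact heq⟩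
  · have : PMsg.tocobc tp ∈ (e.cfg s0).chan tp.sender i := by
      rw [hhead]; exact List.mem_cons_self
    obtain ⟨s, hs, h2, h3⟩ := toco_in_chan_src e s0 this
    exact ⟨s, by omega, h2, h3⟩

end Src
section Count
open scoped Classical
variable {n : ℕ} {M : Type} {G : SimpleGraph (Fin n)} (e : Execution n M G)

/-- Number of deliveries at `p_j` of messages from `p_k` before time `t`. -/
noncomputable def delCount (j k : Fin n) (t : ℕ) : ℕ :=
  ((Finset.range t).filter
    (fun s => ∃ tp : Tuple n M, e.lbl s = some (.deliver j tp) ∧ tp.sender = k)).card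

/-- Number of broadcasts by `p_i` before time `t`. -/
noncomputable def bcCount (i : Fin n) (t : ℕ) : ℕ :=
  ((Finset.range t).filter (fun s => ∃ m : M, e.lbl s = some (.broadcast i m))).card

theorem count_step (P : ℕ → Prop) (t : ℕ) :
    ((Finset.range (t+1)).filter P).card =
    ((Finset.range t).filter P).card + if P t then 1 else 0 := by
  rw [Finset.range_add_one, Finset.filter_insert]
  split_ifs with h
  · rw [Finset.card_insert_of_notMem (by simp), Nat.add_comm]
  · rfl

theorem caus_formula (j k : Fin n) :
    ∀ t, caus e t j k = if k = j then bcCount e j t else delCount e j k t := by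
  intro t
  induction t with
  | zero =>
    have h0 : caus e 0 j k = 0 := by unfold caus; rw [e.init]; rfl
    rw [h0]
    unfold bcCount delCount
    simp
  | succ t ih =>
    have hspec := spec_all e t
    have hstep : ∀ (P : ℕ → Prop), ¬ P t →
        ((Finset.range (t+1)).filter P).card = ((Finset.range t).filter P).card := by
      intro P hP; rw [count_step P t, if_neg hP, Nat.add_zero]
    cases hl : e.lbl t with
    | none =>
      rw [hl] at hspec; simp only [StepSpec] at hspec
      have hc : caus e (t+1) j k = caus e t j k := by unfold caus; rw [hspec]
      rw [hc, ih]
      unfold bcCount delCount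
      split_ifs with hkj
      · rw [hstep _ (by rintro ⟨m, hm⟩; rw [hl] at hm; exact nomatch hm)]
      · rw [hstep _ (by rintro ⟨tp, hm, -⟩; rw [hl] at hm; exact nomatch hm)]
    | some l =>
      rw [hl] at hspec
      cases l with
      | broadcast i0 m =>
        simp only [StepSpec] at hspec
        by_cases hj : j = i0
        · subst hj
          have hPd : ¬ ∃ tp : Tuple n M, e.lbl t = some (.deliver j tp) ∧ tp.sender = k := by
            rintro ⟨tp, hm, -⟩; rw [hl] at hm; simp at hm
          by_cases hk : k = j
          · subst hk
            have hc : caus e (t+1) k k = caus e t k k + 1 := by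
              unfold caus
              rw [hspec]
              try dsimp only
              rw [Function.update_self]
              try dsimp only
              rw [Function.update_self]
            rw [hc, ih, if_pos rfl, if_pos rfl]
            unfold bcCount
            rw [count_step, if_pos ⟨m, hl⟩]
          · have hc : caus e (t+1) j k = caus e t j k := by
              unfold caus
              rw [hspec]
              try dsimp only
              rw [Function.update_self]
              try dsimp only
              rw [Function.update_of_ne hk]
            rw [hc, ih, if_neg hk, if_neg hk]
            unfold delCount
            rw [hstep _ hPd]
        · have hc : caus e (t+1) j k = caus e t j k := by
            unfold caus
            rw [hspec]
            try dsimp only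
            rw [Function.update_of_ne hj]
          rw [hc, ih]
          split_ifs with hkj
          · unfold bcCount
            rw [hstep _ (by rintro ⟨m', hm⟩; rw [hl] at hm; simp at hm; exact hj hm.1.symm)]
          · unfold delCount
            rw [hstep _ (by rintro ⟨tp, hm, -⟩; rw [hl] at hm; simp at hm)]
      | recvToco i0 j0 =>
        simp only [StepSpec] at hspec
        obtain ⟨tp0, rest, hhead, hcfg⟩ := hspec
        have hc : caus e (t+1) j k = caus e t j k := by
          unfold caus
          rw [hcfg]
          by_cases hj : j = i0
          · subst hj; try dsimp only; rw [Function.update_self]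
          · try dsimp only; rw [Function.update_of_ne hj]
        rw [hc, ih]
        split_ifs with hkj
        · unfold bcCount
          rw [hstep _ (by rintro ⟨m', hm⟩; rw [hl] at hm; simp at hm)]
        · unfold delCount
          rw [hstep _ (by rintro ⟨tp, hm, -⟩; rw [hl] at hm; simp at hm)]
      | recvCatchup i0 j0 =>
        simp only [StepSpec] at hspec
        obtain ⟨d, s0, rest, hhead, hcfg⟩ := hspec
        have hc : caus e (t+1) j k = caus e t j k := by
          unfold caus
          rw [hcfg]
          by_cases hj : j = i0
          · subst hj; try dsimp only; rw [Function.update_self]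
          · try dsimp only; rw [Function.update_of_ne hj]
        rw [hc, ih]
        split_ifs with hkj
        · unfold bcCount
          rw [hstep _ (by rintro ⟨m', hm⟩; rw [hl] at hm; simp at hm)]
        · unfold delCount
          rw [hstep _ (by rintro ⟨tp, hm, -⟩; rw [hl] at hm; simp at hm)]
      | deliver i0 tp0 =>
        simp only [StepSpec] at hspec
        obtain ⟨-, -, hcfg⟩ := hspec
        have hPb : ¬ ∃ m' : M, e.lbl t = some (.broadcast j m') := by
          rintro ⟨m', hm⟩; rw [hl] at hm; simp at hm
        by_cases hj : j = i0
        · subst hj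
          by_cases hsd : tp0.sender = j
          · have hc : caus e (t+1) j k = caus e t j k := by
              unfold caus
              rw [hcfg]
              try dsimp only
              rw [Function.update_self]
              try dsimp only
              rw [if_pos hsd]
            rw [hc, ih]
            split_ifs with hkj
            · unfold bcCount; rw [hstep _ hPb]
            · unfold delCount
              rw [hstep _ ?_]
              rintro ⟨tp, hm, hms⟩
              rw [hl] at hm
              simp only [Option.some.injEq, Label.deliver.injEq] at hm
              rw [← hm.2] at hms
              rw [hsd] at hms
              exact hkj hms.symm
          · by_cases hk : k = tp0.sender
            · have hc : caus e (t+1) j k = caus e t j k + 1 := by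
                unfold caus
                rw [hcfg]
                try dsimp only
                rw [Function.update_self]
                try dsimp only
                rw [if_neg hsd, hk, Function.update_self]
              have hkj : ¬ k = j := fun h => hsd (hk ▸ h : tp0.sender = j)
              rw [hc, ih, if_neg hkj, if_neg hkj]
              unfold delCount
              rw [count_step, if_pos ⟨tp0, hl, hk.symm⟩]
            · have hc : caus e (t+1) j k = caus e t j k := by
                unfold caus
                rw [hcfg]
                try dsimp only
                rw [Function.update_self]
                try dsimp only
                rw [if_neg hsd, Function.update_of_ne hk]
              rw [hc, ih]
              split_ifs with hkj
              · unfold bcCount; rw [hstep _ hPb]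
              · unfold delCount
                rw [hstep _ ?_]
                rintro ⟨tp, hm, hms⟩
                rw [hl] at hm
                simp only [Option.some.injEq, Label.deliver.injEq] at hm
                rw [← hm.2] at hms
                exact hk hms.symm
        · have hc : caus e (t+1) j k = caus e t j k := by
            unfold caus
            rw [hcfg]
            try dsimp only
            rw [Function.update_of_ne hj]
          rw [hc, ih]
          split_ifs with hkj
          · unfold bcCount; rw [hstep _ hPb]
          · unfold delCount
            rw [hstep _ ?_]
            rintro ⟨tp, hm, -⟩
            rw [hl] at hm
            simp only [Option.some.injEq, Label.deliver.injEq] at hm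
            exact hj hm.1.symm

theorem delCount_ge {j k : Fin n} (S : Finset (Tuple n M))
    (hsd : ∀ tp ∈ S, tp.sender = k)
    (hdel : ∀ tp ∈ S, ∃ s, e.lbl s = some (.deliver j tp)) :
    ∃ T, S.card ≤ delCount e j k T := by
  classical
  set f : Tuple n M → ℕ := fun tp =>
    if h : ∃ s, e.lbl s = some (.deliver j tp) then Classical.choose h else 0 with hf
  have hfspec : ∀ tp ∈ S, e.lbl (f tp) = some (.deliver j tp) := by
    intro tp htp
    rw [hf]
    simp only
    rw [dif_pos (hdel tp htp)]
    exact Classical.choose_spec (hdel tp htp)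
  refine ⟨S.sup f + 1, ?_⟩
  unfold delCount
  refine Finset.card_le_card_of_injOn f ?_ ?_
  · intro tp htp
    simp only [Finset.mem_coe, Finset.mem_filter, Finset.mem_range]
    exact ⟨Nat.lt_succ_of_le (Finset.le_sup htp), tp, hfspec tp htp, hsd tp htp⟩
  · intro tp1 h1 tp2 h2 heq
    have := (hfspec tp1 h1).symm.trans (heq ▸ hfspec tp2 h2)
    simp only [Option.some.injEq, Label.deliver.injEq] at this
    exact this.2

theorem bcCount_ge {k : Fin n} (S : Finset (Tuple n M))
    (hbc : ∀ tp ∈ S, ∃ s, e.lbl s = some (.broadcast k tp.msg) ∧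
      tp = bcTuple (e.cfg s) k tp.msg) :
    ∃ T, S.card ≤ bcCount e k T := by
  classical
  set f : Tuple n M → ℕ := fun tp =>
    if h : ∃ s, e.lbl s = some (.broadcast k tp.msg) ∧ tp = bcTuple (e.cfg s) k tp.msg then
      Classical.choose h else 0 with hf
  have hfspec : ∀ tp ∈ S, e.lbl (f tp) = some (.broadcast k tp.msg) ∧
      tp = bcTuple (e.cfg (f tp)) k tp.msg := by
    intro tp htp
    rw [hf]
    simp only
    rw [dif_pos (hbc tp htp)]
    exact Classical.choose_spec (hbc tp htp)
  refine ⟨S.sup f + 1, ?_⟩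
  unfold bcCount
  refine Finset.card_le_card_of_injOn f ?_ ?_
  · intro tp htp
    simp only [Finset.mem_coe, Finset.mem_filter, Finset.mem_range]
    exact ⟨Nat.lt_succ_of_le (Finset.le_sup htp), tp.msg, (hfspec tp htp).1⟩
  · intro tp1 h1 tp2 h2 heq
    have e1 := hfspec tp1 h1
    have e2 := hfspec tp2 h2
    rw [← heq] at e2
    have := e1.1.symm.trans e2.1
    simp only [Option.some.injEq, Label.broadcast.injEq] at this
    rw [e1.2, e2.2, this.2]

theorem delCount_tuples (j k : Fin n) (t : ℕ) :
    ∃ S : Finset (Tuple n M), S.card = delCount e j k t ∧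
      ∀ tp ∈ S, tp.sender = k ∧ ∃ s, s < t ∧ e.lbl s = some (.deliver j tp) := by
  classical
  set F := (Finset.range t).filter
    (fun s => ∃ tp : Tuple n M, e.lbl s = some (.deliver j tp) ∧ tp.sender = k) with hF
  have hmem : ∀ s ∈ F,
      (∃ tp : Tuple n M, e.lbl s = some (.deliver j tp) ∧ tp.sender = k) ∧ s < t := by
    intro s hs
    rw [hF] at hs
    simp only [Finset.mem_filter, Finset.mem_range] at hs
    exact ⟨hs.2, hs.1⟩
  refine ⟨F.attach.image (fun s => Classical.choose (hmem s.1 s.2).1), ?_, ?_⟩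
  · have hinj : Set.InjOn (fun s : {x // x ∈ F} => Classical.choose (hmem s.1 s.2).1)
        F.attach := by
      intro s1 h1 s2 h2 heq
      have c1 := Classical.choose_spec (hmem s1.1 s1.2).1
      have c2 := Classical.choose_spec (hmem s2.1 s2.2).1
      simp only at heq
      rw [heq] at c1
      exact Subtype.ext (deliver_time_unique e c1.1 c2.1)
    rw [Finset.card_image_of_injOn hinj, Finset.card_attach]
    unfold delCount
    rw [hF]
  · intro tp htp
    simp only [Finset.mem_image, Finset.mem_attach, true_and] at htp
    obtain ⟨s, hs⟩ := htp
    have c := Classical.choose_spec (hmem s.1 s.2).1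
    rw [hs] at c
    exact ⟨c.2, s.1, (hmem s.1 s.2).2, c.1⟩

theorem bcCount_tuples (k : Fin n) (t : ℕ) :
    ∃ S : Finset (Tuple n M), S.card = bcCount e k t ∧
      ∀ tp ∈ S, ∃ s, s < t ∧ e.lbl s = some (.broadcast k tp.msg) ∧
        tp = bcTuple (e.cfg s) k tp.msg := by
  classical
  set F := (Finset.range t).filter (fun s => ∃ m : M, e.lbl s = some (.broadcast k m)) with hF
  have hmem : ∀ s ∈ F, (∃ m : M, e.lbl s = some (.broadcast k m)) ∧ s < t := by
    intro s hs
    rw [hF] at hs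
    simp only [Finset.mem_filter, Finset.mem_range] at hs
    exact ⟨hs.2, hs.1⟩
  refine ⟨F.attach.image
    (fun s => bcTuple (e.cfg s.1) k (Classical.choose (hmem s.1 s.2).1)), ?_, ?_⟩
  · have hinj : Set.InjOn
        (fun s : {x // x ∈ F} => bcTuple (e.cfg s.1) k (Classical.choose (hmem s.1 s.2).1))
        F.attach := by
      intro s1 h1 s2 h2 heq
      have c1 := Classical.choose_spec (hmem s1.1 s1.2).1
      have c2 := Classical.choose_spec (hmem s2.1 s2.2).1
      simp only at heq
      have hstot := congrArg Tuple.stot heq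
      rcases lt_trichotomy s1.1 s2.1 with hlt | heqs | hlt
      · have := bc_stot_lt e c1 c2 hlt
        omega
      · exact Subtype.ext heqs
      · have := bc_stot_lt e c2 c1 hlt
        omega
    rw [Finset.card_image_of_injOn hinj, Finset.card_attach]
    unfold bcCount
    rw [hF]
  · intro tp htp
    simp only [Finset.mem_image, Finset.mem_attach, true_and] at htp
    obtain ⟨s, hs⟩ := htp
    have c := Classical.choose_spec (hmem s.1 s.2).1
    refine ⟨s.1, (hmem s.1 s.2).2, ?_, ?_⟩
    · rw [← hs]
      exact c
    · rw [← hs]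
      rfl

end Count
section Order
open scoped Classical
variable {n : ℕ} {M : Type} {G : SimpleGraph (Fin n)} (e : Execution n M G)

/-- Measure of a tuple: its timestamp, linearized. -/
def mu (tp : Tuple n M) : ℕ := tp.stot * n + tp.sender.val

theorem pair_mu_lt {a c : ℕ} {b d : Fin n} (h : tsLt (a, b) (c, d)) :
    a * n + b.val < c * n + d.val := by
  rcases h with h | h
  · have hb := b.isLt
    have h1 : a + 1 ≤ c := Nat.succ_le_of_lt h
    calc a * n + b.val < a * n + n := by omega
    _ = (a + 1) * n := by ring
    _ ≤ c * n := Nat.mul_le_mul_right n h1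
    _ ≤ c * n + d.val := Nat.le_add_right _ _
  · have h1 : a = c := h.1
    subst h1
    have h2 : b.val < d.val := h.2
    omega

theorem tsLt_mu {tp1 tp2 : Tuple n M}
    (h : tsLt (tp1.stot, tp1.sender) (tp2.stot, tp2.sender)) : mu tp1 < mu tp2 :=
  pair_mu_lt h

theorem mu_lt_of_stot_lt {tp1 tp2 : Tuple n M} (h : tp1.stot < tp2.stot) :
    mu tp1 < mu tp2 := tsLt_mu (Or.inl h)

theorem tsLt_trichot (x y : ℕ × Fin n) : tsLt x y ∨ x = y ∨ tsLt y x := by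
  rcases x with ⟨a, b⟩; rcases y with ⟨c, d⟩
  rcases lt_trichotomy a c with h | h | h
  · exact Or.inl (Or.inl h)
  · subst h
    rcases lt_trichotomy b d with h' | h' | h'
    · exact Or.inl (Or.inr ⟨rfl, h'⟩)
    · exact Or.inr (Or.inl (by rw [h']))
    · exact Or.inr (Or.inr (Or.inr ⟨rfl, h'⟩))
  · exact Or.inr (Or.inr (Or.inl h))

theorem eventually_all_fin (P : Fin n → ℕ → Prop)
    (h : ∀ k, ∃ T, ∀ t, T ≤ t → P k t) : ∃ T, ∀ t, T ≤ t → ∀ k, P k t := by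
  choose f hf using h
  exact ⟨Finset.univ.sup f, fun t ht k =>
    hf k t (le_trans (Finset.le_sup (Finset.mem_univ k)) ht)⟩

theorem tot_exceeds (hf : Fair e) {i : Fin n} {m : M} {tb : ℕ}
    (hl : e.lbl tb = some (.broadcast i m)) (j k : Fin n) (hk : k ≠ i) :
    ∃ T, ∀ t, T ≤ t → (bcTuple (e.cfg tb) i m).stot < tot e t j k := by
  have hch := (bc_effect e hl).2.1 k hk
  obtain ⟨t', ht', hmem, hlt⟩ := toco_processed e hf hch
  obtain ⟨T, hT, hall⟩ := tot_reaches_forever e hf (t'+1) j k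
  exact ⟨T, fun t ht => lt_of_lt_of_le hlt (hall t ht)⟩

theorem tuple_arrives (hf : Fair e) {i : Fin n} {m : M} {tb : ℕ}
    (hl : e.lbl tb = some (.broadcast i m)) (j : Fin n) :
    ∃ t0, bcTuple (e.cfg tb) i m ∈ pend e t0 j := by
  by_cases hji : j = i
  · exact ⟨tb + 1, hji ▸ (bc_effect e hl).1⟩
  · have hch := (bc_effect e hl).2.1 j hji
    obtain ⟨t', -, hmem, -⟩ := toco_processed e hf hch
    exact ⟨t' + 1, hmem⟩

end Order
section Catchup
open scoped Classical
variable {n : ℕ} {M : Type} {G : SimpleGraph (Fin n)} (e : Execution n M G)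

theorem deliver_pend {s : ℕ} {j : Fin n} {tp : Tuple n M}
    (h : e.lbl s = some (.deliver j tp)) : tp ∈ pend e s j := by
  have hspec := spec_all e s
  rw [h] at hspec
  simp only [StepSpec] at hspec
  exact hspec.1.1.1.1

/-- Induction hypothesis: every message whose tuple has measure `< N` that is
toco-broadcast is delivered everywhere. -/
def IHyp (N : ℕ) : Prop :=
  ∀ tp' : Tuple n M, mu tp' < N →
    (∃ s, e.lbl s = some (.broadcast tp'.sender tp'.msg) ∧
      tp' = bcTuple (e.cfg s) tp'.sender tp'.msg) →
    ∀ j' : Fin n, ∃ t', e.lbl t' = some (.deliver j' tp')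

theorem stot_lt_of_delivered_before {i : Fin n} {tp' : Tuple n M} {s tb : ℕ}
    (hk : tp'.sender ≠ i) (hmem : tp' ∈ pend e s i) (hstb : s ≤ tb) :
    tp'.stot < tot e tb i i + 1 := by
  obtain ⟨s1, hs1, he1⟩ := mem_entry_exists e hmem
  rcases enters_cases e he1 with ⟨hsd, -, -, -, -⟩ | ⟨-, -, -, -, hlt⟩
  · exact absurd hsd hk
  · have := total_mono e i i (show s1 + 1 ≤ tb by omega)
    unfold tot at *
    omega

theorem causal_catchup (hf : Fair e) {i : Fin n} {m : M} {tb : ℕ}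
    (hl : e.lbl tb = some (.broadcast i m)) (j : Fin n)
    (IH : IHyp e (mu (bcTuple (e.cfg tb) i m))) :
    ∃ T, ∀ t, T ≤ t → ∀ k, (bcTuple (e.cfg tb) i m).scaus k ≤ caus e t j k := by
  have hscaus : ∀ k, (bcTuple (e.cfg tb) i m).scaus k = caus e tb i k := fun k => rfl
  have hstot : (bcTuple (e.cfg tb) i m).stot = tot e tb i i + 1 := rfl
  by_cases hji : j = i
  · subst hji
    exact ⟨tb, fun t ht k => (hscaus k) ▸ causal_mono e j k ht⟩
  refine eventually_all_fin (fun k t => (bcTuple (e.cfg tb) i m).scaus k ≤ caus e t j k) ?_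
  intro k
  suffices h : ∃ T0, (bcTuple (e.cfg tb) i m).scaus k ≤ caus e T0 j k by
    obtain ⟨T0, hT0⟩ := h
    exact ⟨T0, fun t ht => le_trans hT0 (causal_mono e j k ht)⟩
  by_cases hk : k = i
  · -- messages previously broadcast by i itself
    rw [hk]
    have hval : (bcTuple (e.cfg tb) i m).scaus i = bcCount e i tb := by
      rw [hscaus i, caus_formula e i i tb, if_pos rfl]
    obtain ⟨S, hcard, hS⟩ := bcCount_tuples e i tb
    have hsd : ∀ tp' ∈ S, tp'.sender = i := by
      intro tp' h'
      obtain ⟨s, -, -, heq⟩ := hS tp' h'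
      rw [heq]
      rfl
    have hdel : ∀ tp' ∈ S, ∃ s', e.lbl s' = some (.deliver j tp') := by
      intro tp' h'
      obtain ⟨s, hslt, hb, heq⟩ := hS tp' h'
      have h1 : tot e (s+1) i i = tp'.stot := by
        have := (bc_effect e hb).2.2
        rw [← heq] at this
        exact this
      have hstlt : tp'.stot < (bcTuple (e.cfg tb) i m).stot := by
        have hmono := total_mono e i i (show s + 1 ≤ tb by omega)
        rw [hstot]
        unfold tot at *
        omega
      refine IH tp' (mu_lt_of_stot_lt hstlt) ⟨s, ?_, ?_⟩ j
      · rw [hsd tp' h']; exact hb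
      · rw [hsd tp' h']; exact heq
    obtain ⟨T, hT⟩ := delCount_ge e S hsd hdel
    refine ⟨T, ?_⟩
    rw [hval, caus_formula e j i T, if_neg (fun h => hji h.symm)]
    rw [← hcard]
    exact hT
  · -- messages from k delivered by i before the broadcast
    have hval : (bcTuple (e.cfg tb) i m).scaus k = delCount e i k tb := by
      rw [hscaus k, caus_formula e i k tb, if_neg hk]
    obtain ⟨S, hcard, hS⟩ := delCount_tuples e i k tb
    have hsd : ∀ tp' ∈ S, tp'.sender = k := fun tp' h' => (hS tp' h').1
    have hsmall : ∀ tp' ∈ S, mu tp' < mu (bcTuple (e.cfg tb) i m) := by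
      intro tp' h'
      obtain ⟨-, s, hslt, hdel'⟩ := hS tp' h'
      have hmem := deliver_pend e hdel'
      have hki : tp'.sender ≠ i := by rw [hsd tp' h']; exact hk
      have := stot_lt_of_delivered_before e hki hmem (le_of_lt hslt)
      exact mu_lt_of_stot_lt (by rw [hstot]; exact this)
    have hprov : ∀ tp' ∈ S, ∃ s, e.lbl s = some (.broadcast tp'.sender tp'.msg) ∧
        tp' = bcTuple (e.cfg s) tp'.sender tp'.msg := by
      intro tp' h'
      obtain ⟨-, s, hslt, hdel'⟩ := hS tp' h'
      obtain ⟨s0, -, hb, heq⟩ := pend_src e (deliver_pend e hdel')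
      exact ⟨s0, hb, heq⟩
    have hdel : ∀ tp' ∈ S, ∃ s', e.lbl s' = some (.deliver j tp') :=
      fun tp' h' => IH tp' (hsmall tp' h') (hprov tp' h') j
    by_cases hjk : j = k
    · have hbc : ∀ tp' ∈ S, ∃ s, e.lbl s = some (.broadcast k tp'.msg) ∧
          tp' = bcTuple (e.cfg s) k tp'.msg := by
        intro tp' h'
        obtain ⟨s, hb, heq⟩ := hprov tp' h'
        rw [hsd tp' h'] at hb heq
        exact ⟨s, hb, heq⟩
      obtain ⟨T, hT⟩ := bcCount_ge e S hbc
      refine ⟨T, ?_⟩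
      rw [hval, caus_formula e j k T, if_pos hjk.symm, hjk, ← hcard]
      exact hT
    · obtain ⟨T, hT⟩ := delCount_ge e S hsd hdel
      refine ⟨T, ?_⟩
      rw [hval, caus_formula e j k T, if_neg (fun h => hjk h.symm), ← hcard]
      exact hT

theorem small_gone (hf : Fair e) {i : Fin n} {m : M} {tb : ℕ}
    (hl : e.lbl tb = some (.broadcast i m)) (j : Fin n)
    (IH : IHyp e (mu (bcTuple (e.cfg tb) i m))) :
    ∃ T, ∀ t, T ≤ t → ∀ tp' ∈ pend e t j,
      ¬ tsLt (tp'.stot, tp'.sender) ((bcTuple (e.cfg tb) i m).stot, i) := by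
  set tp := bcTuple (e.cfg tb) i m with htp
  have key : ∀ p : ℕ × Fin n, ∃ d, tsLt p (tp.stot, i) →
      ∀ t, d ≤ t → ∀ tp' ∈ pend e t j, (tp'.stot, tp'.sender) = p → False := by
    intro p
    by_cases hts : tsLt p (tp.stot, i)
    · by_cases hex : ∃ (t0 : ℕ) (tp0 : Tuple n M),
          tp0 ∈ pend e t0 j ∧ (tp0.stot, tp0.sender) = p
      · obtain ⟨t0, tp0, hp0, hpts⟩ := hex
        have hmu : mu tp0 < mu tp :=
          tsLt_mu (show tsLt (tp0.stot, tp0.sender) (tp.stot, tp.sender) by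
            rw [hpts]; exact hts)
        obtain ⟨s0, -, hbc, heq⟩ := pend_src e hp0
        obtain ⟨d0, hd0⟩ := IH tp0 hmu ⟨s0, hbc, heq⟩ j
        refine ⟨d0 + 1, fun _ t ht tp' hmem hts' => ?_⟩
        have heqts : tp'.stot = tp0.stot ∧ tp'.sender = tp0.sender := by
          rw [← hpts] at hts'
          exact ⟨congrArg Prod.fst hts', congrArg Prod.snd hts'⟩
        have htpeq : tp' = tp0 := ts_unique e hmem hp0 heqts.1 heqts.2
        subst htpeq
        exact delivered_not_pending e hd0 (deliver_pend e hd0) (by omega) hmem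
      · exact ⟨0, fun _ t _ tp' hmem hts' => hex ⟨t, tp', hmem, hts'⟩⟩
    · exact ⟨0, fun hts' => absurd hts' hts⟩
  choose F hF using key
  refine ⟨((Finset.range (tp.stot + 1)) ×ˢ (Finset.univ : Finset (Fin n))).sup F,
    fun t ht tp' hmem hts' => ?_⟩
  have hpmem : (tp'.stot, tp'.sender) ∈
      (Finset.range (tp.stot + 1)) ×ˢ (Finset.univ : Finset (Fin n)) := by
    simp only [Finset.mem_product, Finset.mem_range, Finset.mem_univ, and_true]
    rcases hts' with h | h
    · have : tp'.stot < tp.stot := h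
      omega
    · have : tp'.stot = tp.stot := h.1
      omega
  exact hF (tp'.stot, tp'.sender) hts' t (le_trans (Finset.le_sup hpmem) ht) tp' hmem rfl

end Catchup
section Main
open scoped Classical
variable {n : ℕ} {M : Type} {G : SimpleGraph (Fin n)} (e : Execution n M G)

theorem deliver_all (hf : Fair e) :
    ∀ N (i : Fin n) (msg0 : M) (tb : ℕ), e.lbl tb = some (.broadcast i msg0) →
      mu (bcTuple (e.cfg tb) i msg0) < N →
      ∀ j, ∃ t', e.lbl t' = some (.deliver j (bcTuple (e.cfg tb) i msg0)) := by
  intro N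
  induction N using Nat.strong_induction_on with
  | _ N IH =>
  intro i msg0 tb hl hmu j
  set tp := bcTuple (e.cfg tb) i msg0 with htp
  have hIH : IHyp e (mu tp) := by
    intro tp' hmu' hprov j'
    obtain ⟨s, hb, heq⟩ := hprov
    have := IH (mu tp' + 1) (by omega) tp'.sender tp'.msg s hb (by rw [← heq]; omega) j'
    rw [← heq] at this
    exact this
  by_contra hnever
  push_neg at hnever
  obtain ⟨t0, harr⟩ := tuple_arrives e hf hl j
  have hpend : ∀ t, t0 ≤ t → tp ∈ pend e t j :=
    fun t ht => pending_persist e harr ht (fun u => hnever u)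
  obtain ⟨T1, hT1⟩ := causal_catchup e hf hl j hIH
  have hadjT : ∀ k : Fin n, ∃ T, ∀ t, T ≤ t → (G.Adj i k → tp.stot < tot e t j k) := by
    intro k
    by_cases hadj : G.Adj i k
    · obtain ⟨T, hT⟩ := tot_exceeds e hf hl j k (fun h => G.loopless.irrefl i (h ▸ hadj))
      exact ⟨T, fun t ht _ => hT t ht⟩
    · exact ⟨0, fun t _ h => absurd h hadj⟩
  obtain ⟨T2, hT2⟩ :=
    eventually_all_fin (fun k t => G.Adj i k → tp.stot < tot e t j k) hadjT
  obtain ⟨T3, hT3⟩ := small_gone e hf hl j hIH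
  set T := t0 + T1 + T2 + T3 with hT
  have hinT2 : ∀ t, T ≤ t → inT2 G (e.cfg t) j tp := by
    intro t ht
    refine ⟨⟨⟨hpend t (by omega), fun k => hT1 t (by omega) k⟩, ?_⟩, ?_⟩
    · intro k hadj
      exact Or.inl (hT2 t (by omega) k hadj)
    · intro tp' hmem' hadj
      rcases tsLt_trichot (tp.stot, tp.sender) (tp'.stot, tp'.sender) with h | h | h
      · exact h
      · exfalso
        have h1 : tp'.stot = tp.stot := (congrArg Prod.fst h).symm
        have h2 : tp'.sender = tp.sender := (congrArg Prod.snd h).symm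
        have : tp' = tp := ts_unique e hmem' (hpend t (by omega)) h1 h2
        rw [this] at hadj
        exact G.loopless.irrefl tp.sender hadj
      · exact absurd h (hT3 t (by omega) tp' hmem')
  have hDel : ∀ t', T ≤ t' → Deliverable G e j t' := fun t' ht' => ⟨tp, hinT2 t' ht'⟩
  obtain ⟨t', ht', tp'', hdel''⟩ := hf.deliverFair T j hDel
  have hspec := spec_all e t'
  rw [hdel''] at hspec
  simp only [StepSpec] at hspec
  obtain ⟨hT2'', hmin, -⟩ := hspec
  have hle := hmin tp (hinT2 t' ht')
  have hpend'' : tp'' ∈ pend e t' j := hT2''.1.1.1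
  rcases hle with hlt | heq
  · exact hT3 t' (by omega) tp'' hpend'' hlt
  · have h1 : tp''.stot = tp.stot := congrArg Prod.fst heq
    have h2 : tp''.sender = tp.sender := congrArg Prod.snd heq
    have heq' : tp'' = tp := ts_unique e hpend'' (hpend t' (by omega)) h1 h2
    exact hnever t' (heq' ▸ hdel'')

end Main
end Fisheye

namespace Fisheye

/-- **Termination (Theorem 2 of the paper).**  In any (fair) execution of
Algorithm 1 in the stated model, every message that is toco-broadcast by some
process is eventually toco-delivered by every process in the system. -/
theorem termination {n : ℕ} {M : Type} {G : SimpleGraph (Fin n)}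
    (e : Execution n M G) (hfair : Fair e) :
    ∀ (i : Fin n) (m : M) (t : ℕ), e.broadcastsAt i m t →
      ∀ j : Fin n, ∃ t', e.deliversAt j m t' := by
  intro i m t hb j
  obtain ⟨t', ht'⟩ := deliver_all e hfair (mu (bcTuple (e.cfg t) i m) + 1) i m t hb
    (Nat.lt_succ_self _) j
  exact ⟨t', bcTuple (e.cfg t) i m, rfl, ht'⟩

end Fisheye
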